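/- arXiv:0705.4200 — 9 statements merged into one kernel-verified Lean document; each statement's English description precedes it below -/
import Mathlib

section
/- Let μ be a probability measure on an interval I ⊆ ℝ and let x₁,…,xₙ be continuous μ-integrable functions on I that are not μ-a.e. affinely dependent (i.e., for every hyperplane π : α₁x₁+⋯+αₙxₙ = β with (α₁,…,αₙ) ≠ 0, the set {t ∈ I : (x₁(t),…,xₙ(t)) ∉ π} has positive μ-measure). Then the vector of integrals J = (∫_I x₁ dμ, …, ∫_I xₙ dμ) lies in the interior of the convex hull of the curve t ↦ (x₁(t),…,xₙ(t)). -/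
open MeasureTheory

theorem integrals_mem_interior_convexHull (n : ℕ) (I : Set ℝ) (hI : I.OrdConnected)
    (μ : Measure ℝ) [IsProbabilityMeasure μ] (hμI : μ I = 1)
    (x : Fin n → ℝ → ℝ) (hx : ∀ k, ContinuousOn (x k) I)
    (hint : ∀ k, IntegrableOn (x k) I μ)
    (hnd : ∀ (α : Fin n → ℝ), α ≠ 0 → ∀ β : ℝ,
      0 < μ {t ∈ I | ∑ k, α k * x k t ≠ β}) :
    (fun k => ∫ t in I, x k t ∂μ) ∈
      interior (convexHull ℝ ((fun t => fun k => x k t) '' I)) := by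
  classical
  set V : ℝ → Fin n → ℝ := fun t k => x k t with hV
  set K : Set (Fin n → ℝ) := convexHull ℝ (V '' I) with hK
  set J : Fin n → ℝ := fun k => ∫ t in I, x k t ∂μ with hJdef
  by_contra hJ
  have hImeas : MeasurableSet I := hI.measurableSet
  have hIne : I.Nonempty := by
    rw [Set.nonempty_iff_ne_empty]
    intro h
    rw [h, measure_empty] at hμI
    exact one_ne_zero hμI.symm
  have hKconv : Convex ℝ K := convex_convexHull ℝ _
  by_cases hint' : (interior K).Nonempty
  · -- interior nonempty: separate J from the open convex set interior K
    obtain ⟨f, hf⟩ := geometric_hahn_banach_open_point hKconv.interior isOpen_interior hJ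
    obtain ⟨a₀, ha₀⟩ := hint'
    -- f y ≤ f J for all y ∈ K
    have hle : ∀ y ∈ K, f y ≤ f J := by
      intro y hy
      have hmem : ∀ m : ℕ, (1 - 1/((m:ℝ)+1)) • y + (1/((m:ℝ)+1)) • a₀ ∈ interior K := by
        intro m
        have h1 : (0:ℝ) < 1/((m:ℝ)+1) := by positivity
        have h2 : (0:ℝ) ≤ 1 - 1/((m:ℝ)+1) := by
          have : 1/((m:ℝ)+1) ≤ 1 := by
            rw [div_le_one (by positivity)]; linarith [Nat.cast_nonneg (α := ℝ) m]
          linarith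
        exact hKconv.combo_closure_interior_mem_interior (subset_closure hy) ha₀ h2 h1
          (by ring)
      have hlt : ∀ m : ℕ, f y + (1/((m:ℝ)+1)) * (f a₀ - f y) < f J := by
        intro m
        have := hf _ (hmem m)
        simp only [map_add, _root_.map_smul, smul_eq_mul] at this
        have heq : f y + 1/((m:ℝ)+1) * (f a₀ - f y)
            = (1 - 1/((m:ℝ)+1)) * f y + (1/((m:ℝ)+1)) * f a₀ := by ring
        linarith
      have htend : Filter.Tendsto (fun m : ℕ => f y + (1/((m:ℝ)+1)) * (f a₀ - f y))
          Filter.atTop (nhds (f y)) := by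
        have h0 : Filter.Tendsto (fun m : ℕ => 1/((m:ℝ)+1)) Filter.atTop (nhds 0) :=
          tendsto_one_div_add_atTop_nhds_zero_nat
        have := (h0.mul_const (f a₀ - f y)).const_add (f y)
        simpa using this
      exact le_of_tendsto htend (Filter.Eventually.of_forall fun m => (hlt m).le)
    -- the coefficient vector
    set α : Fin n → ℝ := fun k => f (fun j => if k = j then 1 else 0) with hα
    have hfapp : ∀ v : Fin n → ℝ, f v = ∑ k, v k * α k := by
      intro v
      have := LinearMap.pi_apply_eq_sum_univ (f : (Fin n → ℝ) →ₗ[ℝ] ℝ) v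
      simpa [hα, smul_eq_mul] using this
    have hαne : α ≠ 0 := by
      intro h
      have hf0 : ∀ v, f v = 0 := by
        intro v; rw [hfapp v, h]; simp
      have := hf a₀ ha₀
      rw [hf0 a₀, hf0 J] at this
      exact lt_irrefl 0 this
    set β : ℝ := f J with hβ
    -- g t := f (V t)
    have hginteg : IntegrableOn (fun t => ∑ k, x k t * α k) I μ := by
      apply integrable_finset_sum
      intro k _
      exact (hint k).mul_const (α k)
    have hgint : ∫ t in I, (∑ k, x k t * α k) ∂μ = β := by
      rw [integral_finset_sum _ (fun k _ => (hint k).mul_const (α k))]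
      rw [hβ, hfapp J]
      refine Finset.sum_congr rfl fun k _ => ?_
      simp only [hJdef]
      exact integral_mul_const _ _
    have hgle : ∀ t ∈ I, (∑ k, x k t * α k) ≤ β := by
      intro t ht
      have : V t ∈ K := subset_convexHull ℝ _ ⟨t, ht, rfl⟩
      have h2 := hle _ this
      rwa [hfapp (V t)] at h2
    -- h t := β - g t ≥ 0 on I, with zero integral
    have hnonneg : 0 ≤ᵐ[μ.restrict I] fun t => β - ∑ k, x k t * α k := by
      refine (ae_restrict_iff' hImeas).2 (ae_of_all _ fun t ht => ?_)
      simp only [Pi.zero_apply]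
      have := hgle t ht
      linarith
    have hhint : IntegrableOn (fun t => β - ∑ k, x k t * α k) I μ :=
      (integrableOn_const (measure_lt_top μ I).ne).sub hginteg
    have hzero : ∫ t in I, (β - ∑ k, x k t * α k) ∂μ = 0 := by
      rw [integral_sub (integrableOn_const (measure_lt_top μ I).ne : IntegrableOn (fun _ => β) I μ) hginteg,
        hgint, setIntegral_const, measureReal_def, hμI]
      simp
    have hae := (setIntegral_eq_zero_iff_of_nonneg_ae hnonneg hhint).1 hzero
    have hnull : μ.restrict I {t | (β - ∑ k, x k t * α k) ≠ 0} = 0 := by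
      have h2 := hae
      rw [Filter.EventuallyEq, ae_iff] at h2
      simpa using h2
    have hsub : {t ∈ I | ∑ k, α k * x k t ≠ β} ⊆ {t | (β - ∑ k, x k t * α k) ≠ 0} ∩ I := by
      intro t ⟨ht, hne⟩
      refine ⟨?_, ht⟩
      simp only [Set.mem_setOf_eq]
      intro h
      apply hne
      have : ∑ k, x k t * α k = β := by linarith
      rw [← this]
      exact Finset.sum_congr rfl fun k _ => mul_comm _ _
    have hpos := hnd α hαne β
    have : μ {t ∈ I | ∑ k, α k * x k t ≠ β} = 0 := by
      apply measure_mono_null hsub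
      rw [← Measure.restrict_apply' hImeas]
      exact hnull
    rw [this] at hpos
    exact lt_irrefl 0 hpos
  · -- interior empty: K lies in a proper affine subspace
    rw [Set.not_nonempty_iff_eq_empty] at hint'
    have hspan : affineSpan ℝ (V '' I) ≠ ⊤ := by
      intro h
      have := hKconv.interior_nonempty_iff_affineSpan_eq_top.2 (by rw [hK, affineSpan_convexHull]; exact h)
      rw [hint'] at this
      exact Set.not_nonempty_empty this
    obtain ⟨t₀, ht₀⟩ := hIne
    have hpmem : V t₀ ∈ affineSpan ℝ (V '' I) := subset_affineSpan ℝ _ ⟨t₀, ht₀, rfl⟩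
    have hdir : (affineSpan ℝ (V '' I)).direction < ⊤ := by
      rcases lt_or_eq_of_le (le_top (a := (affineSpan ℝ (V '' I)).direction)) with h | h
      · exact h
      · exact absurd ((AffineSubspace.direction_eq_top_iff_of_nonempty ⟨_, hpmem⟩).1 h) hspan
    obtain ⟨f, hfne, hfmap⟩ := Submodule.exists_dual_map_eq_bot_of_lt_top hdir inferInstance
    set α : Fin n → ℝ := fun k => f (fun j => if k = j then 1 else 0) with hα
    have hfapp : ∀ v : Fin n → ℝ, f v = ∑ k, v k * α k := by
      intro v
      have := LinearMap.pi_apply_eq_sum_univ f v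
      simpa [hα, smul_eq_mul] using this
    have hαne : α ≠ 0 := by
      intro h
      apply hfne
      apply LinearMap.ext
      intro v
      rw [hfapp v, h]
      simp
    have hconst : ∀ t ∈ I, f (V t) = f (V t₀) := by
      intro t ht
      have hmem : V t ∈ affineSpan ℝ (V '' I) := subset_affineSpan ℝ _ ⟨t, ht, rfl⟩
      have hvd : V t - V t₀ ∈ (affineSpan ℝ (V '' I)).direction :=
        AffineSubspace.vsub_mem_direction hmem hpmem
      have : f (V t - V t₀) = 0 := by
        have : f (V t - V t₀) ∈ Submodule.map f (affineSpan ℝ (V '' I)).direction :=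
          Submodule.mem_map_of_mem hvd
        rwa [hfmap, Submodule.mem_bot] at this
      have h2 : f (V t) - f (V t₀) = 0 := by rw [← map_sub]; exact this
      linarith
    have hpos := hnd α hαne (f (V t₀))
    have : {t ∈ I | ∑ k, α k * x k t ≠ f (V t₀)} = ∅ := by
      ext t
      simp only [Set.mem_setOf_eq, Set.mem_empty_iff_false, iff_false, not_and]
      intro ht
      rw [← hconst t ht, hfapp (V t)]
      push_neg
      exact Finset.sum_congr rfl fun k _ => mul_comm _ _
    rw [this, measure_empty] at hpos
    exact lt_irrefl 0 hpos
end

section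
/- Let X be a real-valued random variable concentrated on an interval I ⊆ ℝ, and let f, g be continuous functions on I such that f(X) and g(X) have finite second moments. Then there exist λ ∈ [0,1] and t₁, t₂ ∈ I such that E[f(X)g(X)] − E[f(X)]E[g(X)] = λ(1−λ)(f(t₁) − f(t₂))(g(t₁) − g(t₂)). -/
open MeasureTheory Complex Real

private lemma sign_points {μ : Measure ℝ} [IsProbabilityMeasure μ] {y : ℝ → ℝ}
    (hy : Integrable y μ) (h0 : ∫ t, y t ∂μ = 0) {A : Set ℝ} (hA : ∀ᵐ t ∂μ, t ∈ A)
    (hne : ∀ t ∈ A, y t ≠ 0) :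
    (∃ t ∈ A, 0 < y t) ∧ (∃ t ∈ A, y t < 0) := by
  haveI : (ae μ).NeBot := ae_neBot.mpr (IsProbabilityMeasure.ne_zero μ)
  constructor
  · by_contra h
    push_neg at h
    have hle : ∀ᵐ t ∂μ, 0 ≤ -y t := hA.mono (fun t ht => by
      have := h t ht; linarith)
    have hz : ∀ᵐ t ∂μ, -y t = 0 := by
      have := (integral_eq_zero_iff_of_nonneg_ae hle hy.neg).mp (by
        rw [integral_neg, h0, neg_zero])
      exact this
    obtain ⟨t, ht, hz⟩ := (hA.and hz).exists
    exact hne t ht (by linarith)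
  · by_contra h
    push_neg at h
    have hle : ∀ᵐ t ∂μ, 0 ≤ y t := hA.mono (fun t ht => h t ht)
    have hz : ∀ᵐ t ∂μ, y t = 0 := (integral_eq_zero_iff_of_nonneg_ae hle hy).mp h0
    obtain ⟨t, ht, hz⟩ := (hA.and hz).exists
    exact hne t ht hz

private lemma combo_zero {q : ℝ → ℂ} {I : Set ℝ} {t₁ t₂ : ℝ} (h₁ : t₁ ∈ I) (h₂ : t₂ ∈ I)
    {w : ℂ} {c₁ c₂ : ℝ} (hc₁ : 0 < c₁) (hc₂ : c₂ < 0)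
    (e₁ : q t₁ = c₁ • w) (e₂ : q t₂ = c₂ • w) :
    ∃ lam ∈ Set.Icc (0:ℝ) 1, ∃ s₁ ∈ I, ∃ s₂ ∈ I, lam • q s₁ + (1 - lam) • q s₂ = 0 := by
  refine ⟨c₂ / (c₂ - c₁), ⟨?_, ?_⟩, t₁, h₁, t₂, h₂, ?_⟩
  · rw [div_nonneg_iff]
    right; exact ⟨hc₂.le, by linarith⟩
  · rw [div_le_one_iff]
    right; right; exact ⟨by linarith, by linarith⟩
  · rw [e₁, e₂, smul_smul, smul_smul, ← add_smul]
    have hd0 : c₂ - c₁ ≠ 0 := by linarith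
    have h : c₂ / (c₂ - c₁) * c₁ + (1 - c₂ / (c₂ - c₁)) * c₂ = 0 := by
      field_simp
      ring
    rw [h, zero_smul]

private lemma key (I : Set ℝ) (hI : I.OrdConnected) (μ : Measure ℝ) [IsProbabilityMeasure μ]
    (hμI : μ I = 1) (q : ℝ → ℂ) (hq : ContinuousOn q I)
    (hqre : Integrable (fun t => (q t).re) μ) (hqim : Integrable (fun t => (q t).im) μ)
    (hre0 : ∫ t, (q t).re ∂μ = 0) (him0 : ∫ t, (q t).im ∂μ = 0) :
    ∃ lam ∈ Set.Icc (0:ℝ) 1, ∃ t₁ ∈ I, ∃ t₂ ∈ I, lam • q t₁ + (1 - lam) • q t₂ = 0 := by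
  have hIne : I.Nonempty := nonempty_of_measure_ne_zero (by rw [hμI]; exact one_ne_zero)
  have haeI : ∀ᵐ t ∂μ, t ∈ I := by
    have hm : MeasurableSet I := hI.measurableSet
    have h0 : μ Iᶜ = 0 := by
      rw [measure_compl hm (measure_ne_top μ I), hμI, measure_univ, tsub_self]
    exact (ae_iff.mpr (by exact h0))
  by_cases hz : ∃ t ∈ I, q t = 0
  · obtain ⟨t, ht, h0⟩ := hz
    exact ⟨1, ⟨zero_le_one, le_refl 1⟩, t, ht, t, ht, by simp [h0]⟩
  push_neg at hz
  by_cases hap : ∃ s ∈ I, ∃ t ∈ I, ∃ c : ℝ, c < 0 ∧ q s = c • q t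
  · obtain ⟨s, hs, t, ht, c, hc, hqs⟩ := hap
    exact combo_zero ht hs one_pos hc (one_smul ℝ (q t)).symm hqs
  push_neg at hap
  obtain ⟨t₀, ht₀⟩ := hIne
  set w : ℝ → ℂ := fun t => q t / q t₀ with hw
  have hwne : ∀ t ∈ I, w t ≠ 0 := fun t ht => div_ne_zero (hz t ht) (hz t₀ ht₀)
  have hslit : ∀ t ∈ I, w t ∈ slitPlane := by
    intro t ht
    rw [mem_slitPlane_iff]
    by_contra hcon
    push_neg at hcon
    obtain ⟨h1, h2⟩ := hcon
    have him : (w t).im = 0 := h2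
    have hrelt : (w t).re < 0 := by
      rcases lt_or_eq_of_le h1 with h | h
      · exact h
      · exfalso; exact hwne t ht (by
          apply Complex.ext <;> simp [← h, him])
    have hwre : w t = ((w t).re : ℂ) := by
      apply Complex.ext <;> simp [him]
    have hqt : q t = (w t).re • q t₀ := by
      rw [Complex.real_smul, ← hwre, hw]
      show q t = q t / q t₀ * q t₀
      exact (div_mul_cancel₀ (q t) (hz t₀ ht₀)).symm
    exact hap t ht t₀ ht₀ (w t).re hrelt hqt
  set φ : ℝ → ℝ := fun t => (w t).arg with hφ
  have hφlt : ∀ t ∈ I, φ t ∈ Set.Ioo (-π) π := by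
    intro t ht
    refine ⟨Complex.neg_pi_lt_arg _, ?_⟩
    rcases lt_or_eq_of_le (Complex.arg_le_pi (w t)) with h | h
    · exact h
    · exfalso
      rw [Complex.arg_eq_pi_iff] at h
      have := hslit t ht
      rw [mem_slitPlane_iff] at this
      rcases this with hh | hh
      · linarith [h.1]
      · exact hh h.2
  have hexp : ∀ t ∈ I, w t = (‖w t‖ : ℂ) * Complex.exp (φ t * Complex.I) :=
    fun t ht => (Complex.norm_mul_exp_arg_mul_I (w t)).symm
  have hpi : ∀ s ∈ I, ∀ t ∈ I, φ s ≠ φ t + π := by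
    intro s hs t ht h
    have hAs : (0:ℝ) < ‖w s‖ := norm_pos_iff.mpr (hwne s hs)
    have hAt : (0:ℝ) < ‖w t‖ := norm_pos_iff.mpr (hwne t ht)
    have hdiv : q s / q t = (((-(‖w s‖ / ‖w t‖)) : ℝ) : ℂ) := by
      have h1 : q s / q t = w s / w t := by
        rw [hw]
        exact (div_div_div_cancel_right₀ (hz t₀ ht₀) _ _).symm
      have h2 : (↑(φ s) * Complex.I - ↑(φ t) * Complex.I) = ((π : ℝ) : ℂ) * Complex.I := by
        rw [h]; push_cast; ring
      rw [h1]
      conv_lhs => rw [hexp s hs, hexp t ht]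
      rw [mul_div_mul_comm, ← Complex.exp_sub, h2, Complex.exp_pi_mul_I]
      push_cast
      ring
    have hqs : q s = (-(‖w s‖ / ‖w t‖)) • q t := by
      rw [Complex.real_smul, ← hdiv, div_mul_cancel₀ _ (hz t ht)]
    refine hap s hs t ht _ ?_ hqs
    have : 0 < ‖w s‖ / ‖w t‖ := div_pos hAs hAt
    linarith
  have hcont : ContinuousOn φ I := fun t ht =>
    (Complex.continuousAt_arg (hslit t ht)).comp_continuousWithinAt
      ((hq t ht).div_const _)
  set Θ : Set ℝ := φ '' I with hΘ
  have hΘne : Θ.Nonempty := ⟨φ t₀, t₀, ht₀, rfl⟩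
  have hbdd : BddBelow Θ := ⟨-π, by rintro _ ⟨t, ht, rfl⟩; exact (hφlt t ht).1.le⟩
  set m := sInf Θ with hm
  have hlow : ∀ t ∈ I, m ≤ φ t := fun t ht => csInf_le hbdd ⟨t, ht, rfl⟩
  have hupp : ∀ t ∈ I, φ t ≤ m + π := by
    by_contra hcon
    push_neg at hcon
    obtain ⟨s, hs, hgt⟩ := hcon
    have hlt : m < φ s - π := by linarith
    obtain ⟨θ, ⟨t, ht, rfl⟩, hθ⟩ := exists_lt_of_csInf_lt hΘne hlt
    have hsub : Set.uIcc t s ⊆ I := hI.uIcc_subset ht hs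
    have hcφ : ContinuousOn φ (Set.uIcc t s) := hcont.mono hsub
    have hmem : φ t + π ∈ Set.uIcc (φ t) (φ s) := by
      rw [Set.mem_uIcc]
      left
      constructor
      · linarith [Real.pi_pos]
      · linarith
    obtain ⟨s', hs', hval⟩ := intermediate_value_uIcc hcφ hmem
    exact hpi s' (hsub hs') t ht hval
  have hqt₀ : q t₀ ≠ 0 := hz t₀ ht₀
  set E : ℂ := q t₀ * Complex.exp (((m + π/2 : ℝ) : ℂ) * Complex.I) with hE
  have hEne : E ≠ 0 := mul_ne_zero hqt₀ (Complex.exp_ne_zero _)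
  have hdivE : ∀ t ∈ I, q t / E =
      (‖w t‖ : ℂ) * Complex.exp (((φ t - (m + π/2) : ℝ) : ℂ) * Complex.I) := by
    intro t ht
    rw [hE, div_mul_eq_div_div]
    have hwt : q t / q t₀ = w t := rfl
    rw [hwt]
    conv_lhs => rw [hexp t ht]
    rw [mul_div_assoc, ← Complex.exp_sub]
    congr 1
    push_cast
    ring_nf
  have hnn : ∀ t ∈ I, 0 ≤ (q t / E).re := by
    intro t ht
    rw [hdivE t ht, Complex.re_ofReal_mul, Complex.exp_ofReal_mul_I_re]
    apply mul_nonneg (norm_nonneg _)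
    apply Real.cos_nonneg_of_mem_Icc
    constructor
    · have := hlow t ht; linarith
    · have := hupp t ht; linarith
  set x : ℝ → ℝ := fun t => (q t / E).re with hx
  set y : ℝ → ℝ := fun t => (q t / E).im with hy
  have hxdef : x = fun t => (q t).re * (E⁻¹).re - (q t).im * (E⁻¹).im := by
    funext t; rw [hx]; simp [div_eq_mul_inv, Complex.mul_re]
  have hydef : y = fun t => (q t).re * (E⁻¹).im + (q t).im * (E⁻¹).re := by
    funext t; rw [hy]; simp [div_eq_mul_inv, Complex.mul_im]
  have hxint : Integrable x μ := by
    rw [hxdef]; exact (hqre.mul_const _).sub (hqim.mul_const _)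
  have hyint : Integrable y μ := by
    rw [hydef]; exact (hqre.mul_const _).add (hqim.mul_const _)
  have hix : ∫ t, x t ∂μ = 0 := by
    rw [hxdef, integral_sub (hqre.mul_const _) (hqim.mul_const _),
      integral_mul_const, integral_mul_const, hre0, him0]
    ring
  have hiy : ∫ t, y t ∂μ = 0 := by
    rw [hydef, integral_add (hqre.mul_const _) (hqim.mul_const _),
      integral_mul_const, integral_mul_const, hre0, him0]
    ring
  have hxae : ∀ᵐ t ∂μ, x t = 0 := by
    have hpos : 0 ≤ᵐ[μ] x := haeI.mono (fun t ht => hnn t ht)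
    exact (integral_eq_zero_iff_of_nonneg_ae hpos hxint).mp hix
  set A : Set ℝ := {t | t ∈ I ∧ x t = 0} with hA
  have haeA : ∀ᵐ t ∂μ, t ∈ A := (haeI.and hxae).mono (fun t ht => ⟨ht.1, ht.2⟩)
  have hyne : ∀ t ∈ A, y t ≠ 0 := by
    rintro t ⟨ht, hxt⟩ hyt
    apply hz t ht
    have hq0 : q t / E = 0 := by
      apply Complex.ext
      · simpa using hxt
      · simpa using hyt
    rcases div_eq_zero_iff.mp hq0 with h | h
    · exact h
    · exact absurd h hEne
  obtain ⟨⟨tp, hAp, hyp⟩, ⟨tm, hAm, hym⟩⟩ := sign_points hyint hiy haeA hyne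
  have hrep : ∀ t ∈ A, q t = y t • (Complex.I * E) := by
    rintro t ⟨ht, hxt⟩
    have h1 : q t = (q t / E) * E := (div_mul_cancel₀ _ hEne).symm
    have h2 : q t / E = ↑(x t) + ↑(y t) * Complex.I := (Complex.re_add_im _).symm
    rw [h1, h2, hxt, Complex.real_smul]
    push_cast
    ring
  exact combo_zero hAp.1 hAm.1 hyp hym (hrep tp hAp) (hrep tm hAm)


theorem covariance_representation_lambda (I : Set ℝ) (hI : I.OrdConnected)
    (μ : Measure ℝ) [IsProbabilityMeasure μ] (hμI : μ I = 1)
    (f g : ℝ → ℝ) (hf : ContinuousOn f I) (hg : ContinuousOn g I)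
    (hf2 : MemLp f 2 μ) (hg2 : MemLp g 2 μ) :
    ∃ lam ∈ Set.Icc (0:ℝ) 1, ∃ t₁ ∈ I, ∃ t₂ ∈ I,
      (∫ t, f t * g t ∂μ) - (∫ t, f t ∂μ) * (∫ t, g t ∂μ) =
        lam * (1 - lam) * (f t₁ - f t₂) * (g t₁ - g t₂) := by
  set a := ∫ t, f t ∂μ with ha
  set b := ∫ t, g t ∂μ with hb
  set P := ∫ t, f t * g t ∂μ with hP
  set C := P - a * b with hC
  set q : ℝ → ℂ := fun t =>
    (((f t - a) * (g t - b) - C : ℝ) : ℂ) + ((f t - a : ℝ) : ℂ) * Complex.I with hqdef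
  have hqre : ∀ t, (q t).re = (f t - a) * (g t - b) - C := by intro t; simp [hqdef]
  have hqim : ∀ t, (q t).im = f t - a := by intro t; simp [hqdef]
  have hfi : Integrable f μ := hf2.integrable one_le_two
  have hgi : Integrable g μ := hg2.integrable one_le_two
  have hfgi : Integrable (fun t => f t * g t) μ := by
    have h1 : MemLp (g • f) 1 μ := hf2.smul hg2 (hpqr := ⟨by norm_num [ENNReal.inv_two_add_inv_two]⟩)
    have h2 := memLp_one_iff_integrable.mp h1
    have h3 : (g • f) = fun t => f t * g t := by
      funext t; simp [Pi.smul_apply, smul_eq_mul, mul_comm]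
    rwa [h3] at h2
  have hrw : (fun t => (f t - a) * (g t - b) - C) =
      fun t => f t * g t - b * f t - a * g t + (a * b - C) := by
    funext t; ring
  have hx1 : Integrable (fun t => (f t - a) * (g t - b) - C) μ := by
    rw [hrw]
    exact ((hfgi.sub (hfi.const_mul b)).sub (hgi.const_mul a)).add (integrable_const _)
  have hximi : Integrable (fun t => f t - a) μ := hfi.sub (integrable_const _)
  have hintre : Integrable (fun t => (q t).re) μ := by
    have : (fun t => (q t).re) = fun t => (f t - a) * (g t - b) - C := funext hqre
    rw [this]; exact hx1
  have hintim : Integrable (fun t => (q t).im) μ := by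
    have : (fun t => (q t).im) = fun t => f t - a := funext hqim
    rw [this]; exact hximi
  have hire : ∫ t, (q t).re ∂μ = 0 := by
    have h0 : (fun t => (q t).re) = fun t => (f t - a) * (g t - b) - C := funext hqre
    have i1 : Integrable (fun t => f t * g t - b * f t) μ := hfgi.sub (hfi.const_mul b)
    have i2 : Integrable (fun t => f t * g t - b * f t - a * g t) μ := i1.sub (hgi.const_mul a)
    rw [h0, hrw, integral_add i2 (integrable_const _), integral_sub i1 (hgi.const_mul a),
      integral_sub hfgi (hfi.const_mul b), integral_const_mul, integral_const_mul,
      integral_const]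
    simp only [probReal_univ, one_smul, ← ha, ← hb, ← hP]
    rw [hC]; ring
  have hiim : ∫ t, (q t).im ∂μ = 0 := by
    have h0 : (fun t => (q t).im) = fun t => f t - a := funext hqim
    rw [h0, integral_sub hfi (integrable_const _), integral_const]
    simp [measure_univ, ← ha]
  have hqc : ContinuousOn q I := by
    apply ContinuousOn.add
    · exact Complex.continuous_ofReal.comp_continuousOn
        (((hf.sub continuousOn_const).mul (hg.sub continuousOn_const)).sub continuousOn_const)
    · exact (Complex.continuous_ofReal.comp_continuousOn
        (hf.sub continuousOn_const)).mul continuousOn_const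
  obtain ⟨lam, hlam, t₁, ht₁, t₂, ht₂, hcombo⟩ :=
    key I hI μ hμI q hqc hintre hintim hire hiim
  rw [Complex.ext_iff] at hcombo
  obtain ⟨h1, h2⟩ := hcombo
  simp only [Complex.add_re, Complex.add_im, Complex.smul_re, Complex.smul_im,
    Complex.zero_re, Complex.zero_im, smul_eq_mul, hqre, hqim] at h1 h2
  refine ⟨lam, hlam, t₁, ht₁, t₂, ht₂, ?_⟩
  show C = lam * (1 - lam) * (f t₁ - f t₂) * (g t₁ - g t₂)
  linear_combination (-1 : ℝ) * h1 + (lam * (g t₁ - b) + (1 - lam) * (g t₂ - b)) * h2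
end

section
/- Let X be a real-valued random variable concentrated on an interval I ⊆ ℝ, and let f, g be continuous functions on I with m_f ≤ f(t) ≤ M_f and m_g ≤ g(t) ≤ M_g for all t ∈ I. Then |Cov(f(X), g(X))| ≤ (1/4)(M_f − m_f)(M_g − m_g). -/
open MeasureTheory

private lemma gruss_integrable_of_bound {μ : Measure ℝ} [IsProbabilityMeasure μ]
    {h : ℝ → ℝ} (hm : AEStronglyMeasurable h μ) {C : ℝ}
    (hb : ∀ᵐ t ∂μ, |h t| ≤ C) : Integrable h μ :=
  memLp_one_iff_integrable.mp (MemLp.of_bound hm C (by simpa [Real.norm_eq_abs] using hb))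

private lemma gruss_integrable_sq {μ : Measure ℝ} [IsProbabilityMeasure μ]
    {h : ℝ → ℝ} (hm : AEStronglyMeasurable h μ) {C : ℝ}
    (hb : ∀ᵐ t ∂μ, |h t| ≤ C) : Integrable (fun t => (h t) ^ 2) μ := by
  refine gruss_integrable_of_bound
    ((hm.mul hm).congr (Filter.Eventually.of_forall fun t => (pow_two _).symm)) (C := C ^ 2) ?_
  filter_upwards [hb] with t ht
  rw [abs_pow]
  exact pow_le_pow_left₀ (abs_nonneg _) ht 2

theorem gruss_general (I : Set ℝ) (hI : I.OrdConnected)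
    (μ : Measure ℝ) [IsProbabilityMeasure μ] (hμI : μ I = 1)
    (f g : ℝ → ℝ) (hf : ContinuousOn f I) (hg : ContinuousOn g I)
    (mf Mf mg Mg : ℝ)
    (hfb : ∀ t ∈ I, mf ≤ f t ∧ f t ≤ Mf)
    (hgb : ∀ t ∈ I, mg ≤ g t ∧ g t ≤ Mg) :
    |(∫ t, f t * g t ∂μ) - (∫ t, f t ∂μ) * (∫ t, g t ∂μ)| ≤
      (1 / 4) * (Mf - mf) * (Mg - mg) := by
  have hImeas : MeasurableSet I := hI.measurableSet
  have haeI : ∀ᵐ t ∂μ, t ∈ I := by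
    rw [ae_iff]
    have hc := measure_compl hImeas (measure_ne_top μ I)
    rw [hμI, measure_univ] at hc
    simp at hc; exact hc
  have hIne : I.Nonempty := by
    by_contra h
    rw [Set.not_nonempty_iff_eq_empty] at h
    simp [h] at hμI
  obtain ⟨t0, ht0⟩ := hIne
  have hmMf : mf ≤ Mf := le_trans (hfb t0 ht0).1 (hfb t0 ht0).2
  have hmMg : mg ≤ Mg := le_trans (hgb t0 ht0).1 (hgb t0 ht0).2
  -- measurability
  have hfm : AEStronglyMeasurable f μ := by
    have h : AEMeasurable f (μ.restrict I) := hf.aemeasurable hImeas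
    rw [Measure.restrict_eq_self_of_ae_mem haeI] at h
    exact h.aestronglyMeasurable
  have hgm : AEStronglyMeasurable g μ := by
    have h : AEMeasurable g (μ.restrict I) := hg.aemeasurable hImeas
    rw [Measure.restrict_eq_self_of_ae_mem haeI] at h
    exact h.aestronglyMeasurable
  set Cf := max |mf| |Mf| with hCf
  set Cg := max |mg| |Mg| with hCg
  have hfabs : ∀ᵐ t ∂μ, |f t| ≤ Cf := by
    filter_upwards [haeI] with t ht
    have h1 := (hfb t ht).1; have h2 := (hfb t ht).2
    have := le_abs_self Mf; have := neg_abs_le mf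
    have := le_max_right |mf| |Mf|; have := le_max_left |mf| |Mf|
    rw [abs_le]; constructor <;> linarith
  have hgabs : ∀ᵐ t ∂μ, |g t| ≤ Cg := by
    filter_upwards [haeI] with t ht
    have h1 := (hgb t ht).1; have h2 := (hgb t ht).2
    have := le_abs_self Mg; have := neg_abs_le mg
    have := le_max_right |mg| |Mg|; have := le_max_left |mg| |Mg|
    rw [abs_le]; constructor <;> linarith
  have intf : Integrable f μ := gruss_integrable_of_bound hfm hfabs
  have intg : Integrable g μ := gruss_integrable_of_bound hgm hgabs
  have intfg : Integrable (fun t => f t * g t) μ := by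
    refine gruss_integrable_of_bound (hfm.mul hgm) (C := Cf * Cg) ?_
    filter_upwards [hfabs, hgabs] with t h1 h2
    rw [abs_mul]
    exact mul_le_mul h1 h2 (abs_nonneg _) ((abs_nonneg _).trans h1)
  set A := ∫ t, f t ∂μ with hA
  set B := ∫ t, g t ∂μ with hBdef
  set a := (mf + Mf) / 2 with ha
  set b := (mg + Mg) / 2 with hb
  -- a.e. bounds on centered functions
  have hfub : ∀ᵐ t ∂μ, |f t - a| ≤ (Mf - mf) / 2 := by
    filter_upwards [haeI] with t ht
    have h1 := (hfb t ht).1; have h2 := (hfb t ht).2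
    rw [abs_le]; constructor <;> rw [ha] <;> [linarith; linarith]
  have hgvb : ∀ᵐ t ∂μ, |g t - b| ≤ (Mg - mg) / 2 := by
    filter_upwards [haeI] with t ht
    have h1 := (hgb t ht).1; have h2 := (hgb t ht).2
    rw [abs_le]; constructor <;> rw [hb] <;> [linarith; linarith]
  have habsint : ∀ (h : ℝ → ℝ), |∫ t, h t ∂μ| ≤ ∫ t, |h t| ∂μ := fun h => by
    simpa [Real.norm_eq_abs] using norm_integral_le_integral_norm (μ := μ) h
  have hBle : |B| ≤ Cg := by
    calc |B| ≤ ∫ t, |g t| ∂μ := habsint g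
      _ ≤ ∫ _t, Cg ∂μ := integral_mono_ae intg.abs (integrable_const _) hgabs
      _ = Cg := by simp
  have hgBb : ∀ᵐ t ∂μ, |g t - B| ≤ 2 * Cg := by
    filter_upwards [hgabs] with t ht
    calc |g t - B| ≤ |g t| + |B| := abs_sub _ _
      _ ≤ 2 * Cg := by linarith
  -- measurability / integrability of centered functions
  have hum : AEStronglyMeasurable (fun t => f t - a) μ := hfm.sub aestronglyMeasurable_const
  have hvm : AEStronglyMeasurable (fun t => g t - B) μ := hgm.sub aestronglyMeasurable_const
  have intv : Integrable (fun t => g t - B) μ := intg.sub (integrable_const _)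
  have intv2 : Integrable (fun t => (g t - B) ^ 2) μ := gruss_integrable_sq hvm hgBb
  have intvb2 : Integrable (fun t => (g t - b) ^ 2) μ :=
    gruss_integrable_sq (hgm.sub aestronglyMeasurable_const) hgvb
  have intu2 : Integrable (fun t => (f t - a) ^ 2) μ := gruss_integrable_sq hum hfub
  -- key covariance identity
  have key : (∫ t, f t * g t ∂μ) - A * B = ∫ t, (f t - a) * (g t - B) ∂μ := by
    have e : (fun t => (f t - a) * (g t - B))
        = fun t => f t * g t - (a * g t + (B * f t - a * B)) := funext fun t => by ring
    have i1 : Integrable (fun t => B * f t - a * B) μ :=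
      (intf.const_mul B).sub (integrable_const (a * B))
    have i2 : Integrable (fun t => a * g t + (B * f t - a * B)) μ := (intg.const_mul a).add i1
    rw [e, integral_sub intfg i2, integral_add (intg.const_mul a) i1,
      integral_sub (intf.const_mul B) (integrable_const (a * B)),
      integral_const_mul, integral_const_mul, integral_const]
    simp only [probReal_univ, smul_eq_mul, one_mul, ← hA, ← hBdef]
    ring
  -- variance-type bounds
  have intvzero : ∫ t, (g t - B) ∂μ = 0 := by
    rw [integral_sub intg (integrable_const _), integral_const]
    simp [← hBdef]
  have varg : ∫ t, (g t - B) ^ 2 ∂μ ≤ ((Mg - mg) / 2) ^ 2 := by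
    have h1 : ∫ t, (g t - b) ^ 2 ∂μ = (∫ t, (g t - B) ^ 2 ∂μ) + (B - b) ^ 2 := by
      have e : (fun t => (g t - b) ^ 2)
          = fun t => (g t - B) ^ 2 + ((2 * (B - b)) * (g t - B) + (B - b) ^ 2) :=
        funext fun t => by ring
      have i1 : Integrable (fun t => 2 * (B - b) * (g t - B) + (B - b) ^ 2) μ :=
        (intv.const_mul (2 * (B - b))).add (integrable_const ((B - b) ^ 2))
      rw [e, integral_add intv2 i1,
        integral_add (intv.const_mul (2 * (B - b))) (integrable_const ((B - b) ^ 2)),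
        integral_const_mul, intvzero, integral_const]
      simp
    have h2 : ∫ t, (g t - b) ^ 2 ∂μ ≤ ((Mg - mg) / 2) ^ 2 := by
      calc ∫ t, (g t - b) ^ 2 ∂μ ≤ ∫ _t, ((Mg - mg) / 2) ^ 2 ∂μ := by
            refine integral_mono_ae intvb2 (integrable_const _) ?_
            filter_upwards [hgvb] with t ht
            exact sq_le_sq' (by linarith [abs_le.mp ht]) (abs_le.mp ht).2
        _ = ((Mg - mg) / 2) ^ 2 := by simp
    nlinarith [sq_nonneg (B - b)]
  have varf : ∫ t, (f t - a) ^ 2 ∂μ ≤ ((Mf - mf) / 2) ^ 2 := by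
    calc ∫ t, (f t - a) ^ 2 ∂μ ≤ ∫ _t, ((Mf - mf) / 2) ^ 2 ∂μ := by
          refine integral_mono_ae intu2 (integrable_const _) ?_
          filter_upwards [hfub] with t ht
          exact sq_le_sq' (by linarith [abs_le.mp ht]) (abs_le.mp ht).2
      _ = ((Mf - mf) / 2) ^ 2 := by simp
  -- Cauchy–Schwarz (Hölder with p = q = 2)
  have hconj : Real.HolderConjugate 2 2 := Real.holderConjugate_iff.mpr ⟨one_lt_two, by norm_num⟩
  have humabs : AEStronglyMeasurable (fun t => |f t - a|) μ := by
    simpa [Real.norm_eq_abs] using hum.norm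
  have hvmabs : AEStronglyMeasurable (fun t => |g t - B|) μ := by
    simpa [Real.norm_eq_abs] using hvm.norm
  have mem2u : MemLp (fun t => |f t - a|) (ENNReal.ofReal 2) μ :=
    MemLp.of_bound humabs ((Mf - mf) / 2)
      (by filter_upwards [hfub] with t ht; rwa [Real.norm_eq_abs, abs_abs])
  have mem2v : MemLp (fun t => |g t - B|) (ENNReal.ofReal 2) μ :=
    MemLp.of_bound hvmabs (2 * Cg)
      (by filter_upwards [hgBb] with t ht; rwa [Real.norm_eq_abs, abs_abs])
  have holder := integral_mul_le_Lp_mul_Lq_of_nonneg hconj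
    (Filter.Eventually.of_forall fun t => abs_nonneg (f t - a))
    (Filter.Eventually.of_forall fun t => abs_nonneg (g t - B)) mem2u mem2v
  have rpow2 : ∀ x : ℝ, |x| ^ (2 : ℝ) = x ^ 2 := fun x => by
    rw [show (2 : ℝ) = ((2 : ℕ) : ℝ) by norm_num, Real.rpow_natCast, sq_abs]
  simp only [rpow2] at holder
  -- bound the two L² norms
  have hfhalf : (0 : ℝ) ≤ (Mf - mf) / 2 := by linarith
  have hghalf : (0 : ℝ) ≤ (Mg - mg) / 2 := by linarith
  have bu : (∫ t, (f t - a) ^ 2 ∂μ) ^ (1 / 2 : ℝ) ≤ (Mf - mf) / 2 := by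
    calc (∫ t, (f t - a) ^ 2 ∂μ) ^ (1 / 2 : ℝ)
        ≤ (((Mf - mf) / 2) ^ 2) ^ (1 / 2 : ℝ) :=
          Real.rpow_le_rpow (integral_nonneg fun t => sq_nonneg _) varf (by norm_num)
      _ = (Mf - mf) / 2 := by
          rw [show ((Mf - mf) / 2) ^ 2 = ((Mf - mf) / 2) ^ (2 : ℝ) by
              rw [show (2 : ℝ) = ((2 : ℕ) : ℝ) by norm_num, Real.rpow_natCast],
            ← Real.rpow_mul hfhalf]
          norm_num
  have bv : (∫ t, (g t - B) ^ 2 ∂μ) ^ (1 / 2 : ℝ) ≤ (Mg - mg) / 2 := by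
    calc (∫ t, (g t - B) ^ 2 ∂μ) ^ (1 / 2 : ℝ)
        ≤ (((Mg - mg) / 2) ^ 2) ^ (1 / 2 : ℝ) :=
          Real.rpow_le_rpow (integral_nonneg fun t => sq_nonneg _) varg (by norm_num)
      _ = (Mg - mg) / 2 := by
          rw [show ((Mg - mg) / 2) ^ 2 = ((Mg - mg) / 2) ^ (2 : ℝ) by
              rw [show (2 : ℝ) = ((2 : ℕ) : ℝ) by norm_num, Real.rpow_natCast],
            ← Real.rpow_mul hghalf]
          norm_num
  -- put everything together
  calc |(∫ t, f t * g t ∂μ) - A * B| = |∫ t, (f t - a) * (g t - B) ∂μ| := by rw [key]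
    _ ≤ ∫ t, |(f t - a) * (g t - B)| ∂μ := habsint _
    _ = ∫ t, |f t - a| * |g t - B| ∂μ := by simp only [abs_mul]
    _ ≤ (∫ t, (f t - a) ^ 2 ∂μ) ^ (1 / 2 : ℝ) * (∫ t, (g t - B) ^ 2 ∂μ) ^ (1 / 2 : ℝ) := holder
    _ ≤ ((Mf - mf) / 2) * ((Mg - mg) / 2) :=
        mul_le_mul bu bv (Real.rpow_nonneg (integral_nonneg fun t => sq_nonneg _) _) hfhalf
    _ = (1 / 4) * (Mf - mf) * (Mg - mg) := by ring
end

section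
/- Let (pₙ)ₙ≥1 be nonnegative weights with Σₙ pₙ = 1, and let (uₙ), (vₙ) be sequences of reals with u ≤ uₙ ≤ U and v ≤ vₙ ≤ V for all n. Then |Σₙ pₙuₙvₙ − (Σₙ pₙuₙ)(Σₙ pₙvₙ)| ≤ (1/4)(U − u)(V − v). -/
/-- Summability of `p * w` for summable nonneg `p` and bounded `w`. -/
lemma gruss_aux_summable {p w : ℕ → ℝ} (hps : Summable p) (hp : ∀ n, 0 ≤ p n)
    {C : ℝ} (hw : ∀ n, |w n| ≤ C) : Summable (fun n => p n * w n) := by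
  apply Summable.of_abs
  refine Summable.of_nonneg_of_le (fun n => abs_nonneg _) (fun n => ?_) (hps.mul_right C)
  rw [abs_mul, abs_of_nonneg (hp n)]
  exact mul_le_mul_of_nonneg_left (hw n) (hp n)


lemma gruss_aux_cs {a b : ℕ → ℝ} (ha : ∀ n, 0 ≤ a n) (hb : ∀ n, 0 ≤ b n)
    (ha2 : Summable (fun n => a n ^ 2)) (hb2 : Summable (fun n => b n ^ 2)) :
    ∑' n, a n * b n ≤ Real.sqrt (∑' n, a n ^ 2) * Real.sqrt (∑' n, b n ^ 2) := by
  have hab : Summable (fun n => a n * b n) := by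
    refine Summable.of_nonneg_of_le (fun n => mul_nonneg (ha n) (hb n)) (fun n => ?_)
      ((ha2.add hb2).mul_left (1/2))
    nlinarith [sq_nonneg (a n - b n)]
  refine Summable.tsum_le_of_sum_le hab (fun s => ?_)
  calc ∑ i ∈ s, a i * b i
      ≤ Real.sqrt (∑ i ∈ s, a i ^ 2) * Real.sqrt (∑ i ∈ s, b i ^ 2) :=
        Real.sum_mul_le_sqrt_mul_sqrt s a b
    _ ≤ Real.sqrt (∑' n, a n ^ 2) * Real.sqrt (∑' n, b n ^ 2) := by
        gcongr <;> exact Summable.sum_le_tsum s (fun i _ => sq_nonneg _) ‹_›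

lemma gruss_aux_main (q f g : ℕ → ℝ) (hq : ∀ n, 0 ≤ q n)
    (h1 : Summable fun n => q n * (f n * g n))
    (hf2 : Summable fun n => q n * f n ^ 2) (hg2 : Summable fun n => q n * g n ^ 2) :
    |∑' n, q n * (f n * g n)| ≤
      Real.sqrt (∑' n, q n * f n ^ 2) * Real.sqrt (∑' n, q n * g n ^ 2) := by
  have e1 : ∀ n, |q n * (f n * g n)| =
      (Real.sqrt (q n) * |f n|) * (Real.sqrt (q n) * |g n|) := by
    intro n
    rw [abs_mul, abs_mul, abs_of_nonneg (hq n),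
      show (Real.sqrt (q n) * |f n|) * (Real.sqrt (q n) * |g n|)
        = (Real.sqrt (q n) * Real.sqrt (q n)) * (|f n| * |g n|) by ring,
      Real.mul_self_sqrt (hq n)]
  have e2 : ∀ n, (Real.sqrt (q n) * |f n|) ^ 2 = q n * f n ^ 2 := fun n => by
    rw [mul_pow, Real.sq_sqrt (hq n), sq_abs]
  have e3 : ∀ n, (Real.sqrt (q n) * |g n|) ^ 2 = q n * g n ^ 2 := fun n => by
    rw [mul_pow, Real.sq_sqrt (hq n), sq_abs]
  calc |∑' n, q n * (f n * g n)|
      ≤ ∑' n, |q n * (f n * g n)| := by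
        rw [abs_le]
        constructor
        · rw [← tsum_neg]
          exact Summable.tsum_le_tsum (fun n => neg_abs_le _) h1.abs.neg h1
        · exact Summable.tsum_le_tsum (fun n => le_abs_self _) h1 h1.abs
    _ = ∑' n, (Real.sqrt (q n) * |f n|) * (Real.sqrt (q n) * |g n|) := tsum_congr e1
    _ ≤ Real.sqrt (∑' n, (Real.sqrt (q n) * |f n|) ^ 2) *
          Real.sqrt (∑' n, (Real.sqrt (q n) * |g n|) ^ 2) :=
        gruss_aux_cs (fun n => mul_nonneg (Real.sqrt_nonneg _) (abs_nonneg _))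
          (fun n => mul_nonneg (Real.sqrt_nonneg _) (abs_nonneg _))
          (hf2.congr (fun n => (e2 n).symm)) (hg2.congr (fun n => (e3 n).symm))
    _ = Real.sqrt (∑' n, q n * f n ^ 2) * Real.sqrt (∑' n, q n * g n ^ 2) := by
        rw [tsum_congr e2, tsum_congr e3]

set_option maxHeartbeats 2000000 in
theorem gruss_discrete (p u v : ℕ → ℝ) (hp : ∀ n, 0 ≤ p n) (hp1 : ∑' n, p n = 1)
    (lu Lu lv Lv : ℝ) (hu : ∀ n, lu ≤ u n ∧ u n ≤ Lu) (hv : ∀ n, lv ≤ v n ∧ v n ≤ Lv) :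
    |(∑' n, p n * u n * v n) - (∑' n, p n * u n) * (∑' n, p n * v n)| ≤
      (1 / 4) * (Lu - lu) * (Lv - lv) := by
  have hps : Summable p := by
    by_contra h
    rw [tsum_eq_zero_of_not_summable h] at hp1
    norm_num at hp1
  -- bounds
  set Cu := max |lu| |Lu| with hCu
  set Cv := max |lv| |Lv| with hCv
  have hub : ∀ n, |u n| ≤ Cu := fun n => by
    rw [abs_le]
    constructor
    · calc -Cu ≤ -|lu| := by simp [hCu]
        _ ≤ lu := neg_abs_le lu
        _ ≤ u n := (hu n).1
    · calc u n ≤ Lu := (hu n).2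
        _ ≤ |Lu| := le_abs_self Lu
        _ ≤ Cu := le_max_right _ _
  have hvb : ∀ n, |v n| ≤ Cv := fun n => by
    rw [abs_le]
    constructor
    · calc -Cv ≤ -|lv| := by simp [hCv]
        _ ≤ lv := neg_abs_le lv
        _ ≤ v n := (hv n).1
    · calc v n ≤ Lv := (hv n).2
        _ ≤ |Lv| := le_abs_self Lv
        _ ≤ Cv := le_max_right _ _
  -- summability of all relevant series
  have hpu : Summable (fun n => p n * u n) := gruss_aux_summable hps hp hub
  have hpv : Summable (fun n => p n * v n) := gruss_aux_summable hps hp hvb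
  have hpuv : Summable (fun n => p n * u n * v n) := by
    have : Summable (fun n => p n * (u n * v n)) :=
      gruss_aux_summable hps hp (C := Cu * Cv) (fun n => by
        rw [abs_mul]
        exact mul_le_mul (hub n) (hvb n) (abs_nonneg _)
          ((abs_nonneg _).trans (hub 0)))
    simpa [mul_assoc] using this
  set A := ∑' n, p n * u n with hA
  set B := ∑' n, p n * v n with hB
  -- summability of shifted products
  have hgen : ∀ (w : ℕ → ℝ) (C : ℝ), (∀ n, |w n| ≤ C) →
      Summable (fun n => p n * w n) := fun w C hw => gruss_aux_summable hps hp hw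
  have hpuA2 : Summable (fun n => p n * (u n - A) ^ 2) :=
    hgen _ ((Cu + |A|) ^ 2) (fun n => by
      rw [abs_pow]
      gcongr
      calc |u n - A| ≤ |u n| + |A| := abs_sub _ _
        _ ≤ Cu + |A| := by gcongr; exact hub n)
  have hpvB2 : Summable (fun n => p n * (v n - B) ^ 2) :=
    hgen _ ((Cv + |B|) ^ 2) (fun n => by
      rw [abs_pow]
      gcongr
      calc |v n - B| ≤ |v n| + |B| := abs_sub _ _
        _ ≤ Cv + |B| := by gcongr; exact hvb n)
  have hpcov : Summable (fun n => p n * ((u n - A) * (v n - B))) :=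
    hgen _ ((Cu + |A|) * (Cv + |B|)) (fun n => by
      rw [abs_mul]
      have h1 : |u n - A| ≤ Cu + |A| :=
        (abs_sub _ _).trans (by gcongr; exact hub n)
      have h2 : |v n - B| ≤ Cv + |B| :=
        (abs_sub _ _).trans (by gcongr; exact hvb n)
      exact mul_le_mul h1 h2 (abs_nonneg _) ((abs_nonneg _).trans h1))
  -- Step 1: covariance identity
  have hcov : ∑' n, p n * ((u n - A) * (v n - B)) =
      (∑' n, p n * u n * v n) - A * B := by
    have key : ∀ n, p n * ((u n - A) * (v n - B)) =
        p n * u n * v n - A * (p n * v n) - B * (p n * u n) + (A * B) * p n :=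
      fun n => by ring
    calc ∑' n, p n * ((u n - A) * (v n - B))
        = ∑' n, (p n * u n * v n - A * (p n * v n) - B * (p n * u n) + (A*B) * p n) :=
          tsum_congr key
      _ = (∑' n, p n * u n * v n) - A * (∑' n, p n * v n) - B * (∑' n, p n * u n)
            + (A*B) * (∑' n, p n) := by
          rw [Summable.tsum_add (((hpuv.sub (hpv.mul_left A)).sub (hpu.mul_left B)))
              (hps.mul_left (A*B)),
            Summable.tsum_sub (hpuv.sub (hpv.mul_left A)) (hpu.mul_left B),
            Summable.tsum_sub hpuv (hpv.mul_left A), tsum_mul_left, tsum_mul_left, tsum_mul_left]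
      _ = (∑' n, p n * u n * v n) - A * B := by
          rw [hp1, ← hA, ← hB]; ring
  -- Step 3: variance bounds
  have hvaru : ∑' n, p n * (u n - A) ^ 2 ≤ ((Lu - lu) / 2) ^ 2 := by
    have hpu2 : Summable (fun n => p n * u n * u n) := by
      have := hgen (fun n => u n * u n) (Cu * Cu) (fun n => by
        rw [abs_mul]
        exact mul_le_mul (hub n) (hub n) (abs_nonneg _) ((abs_nonneg _).trans (hub 0)))
      simpa [mul_assoc] using this
    have hval : ∑' n, p n * (u n - A) ^ 2 =
        (∑' n, p n * u n * u n) - A ^ 2 := by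
      have key : ∀ n, p n * (u n - A) ^ 2 =
          p n * u n * u n - (2*A) * (p n * u n) + (A^2) * p n := fun n => by ring
      calc ∑' n, p n * (u n - A) ^ 2
          = ∑' n, (p n * u n * u n - (2*A) * (p n * u n) + (A^2) * p n) := tsum_congr key
        _ = (∑' n, p n * u n * u n) - (2*A) * (∑' n, p n * u n)
              + (A^2) * (∑' n, p n) := by
            rw [Summable.tsum_add (hpu2.sub (hpu.mul_left (2*A))) (hps.mul_left (A^2)),
              Summable.tsum_sub hpu2 (hpu.mul_left (2*A)), tsum_mul_left, tsum_mul_left]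
        _ = (∑' n, p n * u n * u n) - A ^ 2 := by rw [hp1, ← hA]; ring
    have hnn : 0 ≤ ∑' n, p n * ((Lu - u n) * (u n - lu)) :=
      tsum_nonneg (fun n => mul_nonneg (hp n)
        (mul_nonneg (by linarith [(hu n).2]) (by linarith [(hu n).1])))
    have hexp : ∑' n, p n * ((Lu - u n) * (u n - lu)) =
        (Lu + lu) * A - (∑' n, p n * u n * u n) - Lu * lu := by
      have key : ∀ n, p n * ((Lu - u n) * (u n - lu)) =
          (Lu + lu) * (p n * u n) - p n * u n * u n - (Lu * lu) * p n := fun n => by ring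
      calc ∑' n, p n * ((Lu - u n) * (u n - lu))
          = ∑' n, ((Lu + lu) * (p n * u n) - p n * u n * u n - (Lu * lu) * p n) :=
            tsum_congr key
        _ = (Lu + lu) * (∑' n, p n * u n) - (∑' n, p n * u n * u n)
              - (Lu * lu) * (∑' n, p n) := by
            rw [Summable.tsum_sub ((hpu.mul_left (Lu+lu)).sub hpu2) (hps.mul_left (Lu*lu)),
              Summable.tsum_sub (hpu.mul_left (Lu+lu)) hpu2, tsum_mul_left, tsum_mul_left]
        _ = (Lu + lu) * A - (∑' n, p n * u n * u n) - Lu * lu := by rw [hp1, ← hA]; ring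
    rw [hval]
    nlinarith [hnn, hexp, sq_nonneg (Lu + lu - 2*A)]
  have hvarv : ∑' n, p n * (v n - B) ^ 2 ≤ ((Lv - lv) / 2) ^ 2 := by
    have hpv2 : Summable (fun n => p n * v n * v n) := by
      have := hgen (fun n => v n * v n) (Cv * Cv) (fun n => by
        rw [abs_mul]
        exact mul_le_mul (hvb n) (hvb n) (abs_nonneg _) ((abs_nonneg _).trans (hvb 0)))
      simpa [mul_assoc] using this
    have hval : ∑' n, p n * (v n - B) ^ 2 =
        (∑' n, p n * v n * v n) - B ^ 2 := by
      have key : ∀ n, p n * (v n - B) ^ 2 =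
          p n * v n * v n - (2*B) * (p n * v n) + (B^2) * p n := fun n => by ring
      calc ∑' n, p n * (v n - B) ^ 2
          = ∑' n, (p n * v n * v n - (2*B) * (p n * v n) + (B^2) * p n) := tsum_congr key
        _ = (∑' n, p n * v n * v n) - (2*B) * (∑' n, p n * v n)
              + (B^2) * (∑' n, p n) := by
            rw [Summable.tsum_add (hpv2.sub (hpv.mul_left (2*B))) (hps.mul_left (B^2)),
              Summable.tsum_sub hpv2 (hpv.mul_left (2*B)), tsum_mul_left, tsum_mul_left]
        _ = (∑' n, p n * v n * v n) - B ^ 2 := by rw [hp1, ← hB]; ring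
    have hnn : 0 ≤ ∑' n, p n * ((Lv - v n) * (v n - lv)) :=
      tsum_nonneg (fun n => mul_nonneg (hp n)
        (mul_nonneg (by linarith [(hv n).2]) (by linarith [(hv n).1])))
    have hexp : ∑' n, p n * ((Lv - v n) * (v n - lv)) =
        (Lv + lv) * B - (∑' n, p n * v n * v n) - Lv * lv := by
      have key : ∀ n, p n * ((Lv - v n) * (v n - lv)) =
          (Lv + lv) * (p n * v n) - p n * v n * v n - (Lv * lv) * p n := fun n => by ring
      calc ∑' n, p n * ((Lv - v n) * (v n - lv))
          = ∑' n, ((Lv + lv) * (p n * v n) - p n * v n * v n - (Lv * lv) * p n) :=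
            tsum_congr key
        _ = (Lv + lv) * (∑' n, p n * v n) - (∑' n, p n * v n * v n)
              - (Lv * lv) * (∑' n, p n) := by
            rw [Summable.tsum_sub ((hpv.mul_left (Lv+lv)).sub hpv2) (hps.mul_left (Lv*lv)),
              Summable.tsum_sub (hpv.mul_left (Lv+lv)) hpv2, tsum_mul_left, tsum_mul_left]
        _ = (Lv + lv) * B - (∑' n, p n * v n * v n) - Lv * lv := by rw [hp1, ← hB]; ring
    rw [hval]
    nlinarith [hnn, hexp, sq_nonneg (Lv + lv - 2*B)]
  -- Step 2: Cauchy–Schwarz chain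
  have hmain : |(∑' n, p n * u n * v n) - A * B| ≤
      Real.sqrt (∑' n, p n * (u n - A) ^ 2) * Real.sqrt (∑' n, p n * (v n - B) ^ 2) := by
    rw [← hcov]
    exact gruss_aux_main p (fun n => u n - A) (fun n => v n - B) hp hpcov hpuA2 hpvB2
  have hLu : lu ≤ Lu := le_trans (hu 0).1 (hu 0).2
  have hLv : lv ≤ Lv := le_trans (hv 0).1 (hv 0).2
  calc |(∑' n, p n * u n * v n) - A * B|
      ≤ Real.sqrt (∑' n, p n * (u n - A) ^ 2) * Real.sqrt (∑' n, p n * (v n - B) ^ 2) :=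
        hmain
    _ ≤ Real.sqrt (((Lu - lu) / 2) ^ 2) * Real.sqrt (((Lv - lv) / 2) ^ 2) := by
        exact mul_le_mul (Real.sqrt_le_sqrt hvaru) (Real.sqrt_le_sqrt hvarv)
          (Real.sqrt_nonneg _) (Real.sqrt_nonneg _)
    _ = ((Lu - lu) / 2) * ((Lv - lv) / 2) := by
        rw [Real.sqrt_sq (by linarith), Real.sqrt_sq (by linarith)]
    _ = (1 / 4) * (Lu - lu) * (Lv - lv) := by ring
end

section
/- Let f, g be continuous functions on [a,b] with m_f ≤ f ≤ M_f and m_g ≤ g ≤ M_g. Then |(1/(b−a))∫ₐᵇ f(t)g(t) dt − (1/(b−a))²(∫ₐᵇ f(t) dt)(∫ₐᵇ g(t) dt)| ≤ (1/4)(M_f − m_f)(M_g − m_g). -/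
open intervalIntegral Set

lemma gruss_cs (a b : ℝ) (hab : a ≤ b) (h k : ℝ → ℝ)
    (hh : ContinuousOn h (Set.uIcc a b)) (hk : ContinuousOn k (Set.uIcc a b)) :
    (∫ t in a..b, h t * k t) ^ 2 ≤
      (∫ t in a..b, (h t) ^ 2) * (∫ t in a..b, (k t) ^ 2) := by
  have ik2 : IntervalIntegrable (fun t => (k t) ^ 2) MeasureTheory.volume a b :=
    (hk.pow 2).intervalIntegrable
  have ihk : IntervalIntegrable (fun t => h t * k t) MeasureTheory.volume a b :=
    (hh.mul hk).intervalIntegrable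
  have ih2 : IntervalIntegrable (fun t => (h t) ^ 2) MeasureTheory.volume a b :=
    (hh.pow 2).intervalIntegrable
  set A := ∫ t in a..b, (k t) ^ 2 with hA
  set B := ∫ t in a..b, h t * k t with hB
  set C := ∫ t in a..b, (h t) ^ 2 with hC
  have key : ∀ x : ℝ, 0 ≤ A * (x * x) + (2 * B) * x + C := by
    intro x
    have e : (fun t => (x * k t + h t) ^ 2) =
        (fun t => x ^ 2 * (k t) ^ 2 + ((2 * x) * (h t * k t) + (h t) ^ 2)) := by
      funext t; ring
    have expand : ∫ t in a..b, (x * k t + h t) ^ 2 = A * (x * x) + (2 * B) * x + C := by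
      rw [e, intervalIntegral.integral_add (ik2.const_mul _)
        ((ihk.const_mul _).add ih2),
        intervalIntegral.integral_add (ihk.const_mul _) ih2,
        intervalIntegral.integral_const_mul, intervalIntegral.integral_const_mul]
      ring
    have h0 : 0 ≤ ∫ t in a..b, (x * k t + h t) ^ 2 :=
      intervalIntegral.integral_nonneg hab (fun t _ => sq_nonneg _)
    linarith [expand ▸ h0]
  have hd := discrim_le_zero key
  rw [discrim] at hd
  nlinarith [hd]

lemma gruss_var (a b : ℝ) (hab : a < b) (f : ℝ → ℝ)
    (hf : ContinuousOn f (Set.uIcc a b)) (m M : ℝ)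
    (hfb : ∀ t ∈ Set.Icc a b, m ≤ f t ∧ f t ≤ M) :
    ∫ t in a..b, (f t - (1 / (b - a)) * ∫ s in a..b, f s) ^ 2 ≤
      (b - a) * ((M - m) / 2) ^ 2 := by
  have hba : (0:ℝ) < b - a := by linarith
  have hba' : b - a ≠ 0 := ne_of_gt hba
  have if1 : IntervalIntegrable f MeasureTheory.volume a b := hf.intervalIntegrable
  have if2 : IntervalIntegrable (fun t => (f t) ^ 2) MeasureTheory.volume a b :=
    (hf.pow 2).intervalIntegrable
  set I := ∫ s in a..b, f s with hI
  set μ := 1 / (b - a) with hμ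
  set c := (m + M) / 2 with hc
  have hμba : μ * (b - a) = 1 := by rw [hμ]; field_simp
  -- expand ∫ (f - d)^2 for constant d
  have expand : ∀ d : ℝ, ∫ t in a..b, (f t - d) ^ 2 =
      (∫ t in a..b, (f t) ^ 2) - 2 * d * I + (b - a) * d ^ 2 := by
    intro d
    have e : (fun t => (f t - d) ^ 2) =
        (fun t => (f t) ^ 2 + ((-(2 * d)) * f t + d ^ 2)) := by
      funext t; ring
    rw [e, intervalIntegral.integral_add if2 ((if1.const_mul _).add
        intervalIntegrable_const),
      intervalIntegral.integral_add (if1.const_mul _) intervalIntegrable_const,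
      intervalIntegral.integral_const_mul, intervalIntegral.integral_const]
    rw [smul_eq_mul]; ring
  have step1 : ∫ t in a..b, (f t - μ * I) ^ 2 ≤ ∫ t in a..b, (f t - c) ^ 2 := by
    rw [expand (μ * I), expand c]
    have hsq : 0 ≤ (μ * I - c) ^ 2 := sq_nonneg _
    have h1 : (b - a) * (μ * I) ^ 2 = μ * I ^ 2 := by
      rw [hμ]; field_simp
    have h2 : (b - a) * (μ * I - c) ^ 2 = μ * I ^ 2 - 2 * c * I + (b - a) * c ^ 2 := by
      rw [hμ]; field_simp; ring
    nlinarith [h1, h2, mul_nonneg hba.le hsq]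
  have step2 : ∫ t in a..b, (f t - c) ^ 2 ≤ (b - a) * ((M - m) / 2) ^ 2 := by
    have hpt : ∀ t ∈ Set.Icc a b, (f t - c) ^ 2 ≤ ((M - m) / 2) ^ 2 := by
      intro t ht
      obtain ⟨h1, h2⟩ := hfb t ht
      nlinarith [mul_nonneg (sub_nonneg.2 h1) (sub_nonneg.2 h2)]
    have h := intervalIntegral.integral_mono_on (μ := MeasureTheory.volume) hab.le
      ((hf.sub continuousOn_const).pow 2).intervalIntegrable
      intervalIntegrable_const hpt
    rwa [intervalIntegral.integral_const, smul_eq_mul] at h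
  linarith

theorem gruss_classical (a b : ℝ) (hab : a < b) (f g : ℝ → ℝ)
    (hf : ContinuousOn f (Set.Icc a b)) (hg : ContinuousOn g (Set.Icc a b))
    (mf Mf mg Mg : ℝ)
    (hfb : ∀ t ∈ Set.Icc a b, mf ≤ f t ∧ f t ≤ Mf)
    (hgb : ∀ t ∈ Set.Icc a b, mg ≤ g t ∧ g t ≤ Mg) :
    |(1 / (b - a)) * ∫ t in a..b, f t * g t -
      (1 / (b - a)) ^ 2 * (∫ t in a..b, f t) * (∫ t in a..b, g t)| ≤
      (1 / 4) * (Mf - mf) * (Mg - mg) := by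
  have hba : (0:ℝ) < b - a := by linarith
  have hba' : b - a ≠ 0 := ne_of_gt hba
  have huIcc : Set.uIcc a b = Set.Icc a b := Set.uIcc_of_le hab.le
  have hf' : ContinuousOn f (Set.uIcc a b) := huIcc ▸ hf
  have hg' : ContinuousOn g (Set.uIcc a b) := huIcc ▸ hg
  set μ := 1 / (b - a) with hμ
  have hμba : μ * (b - a) = 1 := by rw [hμ]; field_simp
  set If := ∫ t in a..b, f t with hIf
  set Ig := ∫ t in a..b, g t with hIg
  set F := fun t => f t - μ * If with hF
  set G := fun t => g t - μ * Ig with hG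
  have hF' : ContinuousOn F (Set.uIcc a b) := hf'.sub continuousOn_const
  have hG' : ContinuousOn G (Set.uIcc a b) := hg'.sub continuousOn_const
  have if1 : IntervalIntegrable f MeasureTheory.volume a b := hf'.intervalIntegrable
  have ig1 : IntervalIntegrable g MeasureTheory.volume a b := hg'.intervalIntegrable
  have ifg : IntervalIntegrable (fun t => f t * g t) MeasureTheory.volume a b :=
    (hf'.mul hg').intervalIntegrable
  -- key identity : ∫ F G = ∫ f g - μ If Ig
  have key : ∫ t in a..b, F t * G t = (∫ t in a..b, f t * g t) - μ * If * Ig := by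
    have e : (fun t => F t * G t) = (fun t => f t * g t +
        ((-(μ * Ig)) * f t + ((-(μ * If)) * g t + μ * If * (μ * Ig)))) := by
      funext t; simp only [hF, hG]; ring
    rw [e, intervalIntegral.integral_add ifg ((if1.const_mul _).add
          ((ig1.const_mul _).add intervalIntegrable_const)),
      intervalIntegral.integral_add (if1.const_mul _)
        ((ig1.const_mul _).add intervalIntegrable_const),
      intervalIntegral.integral_add (ig1.const_mul _) intervalIntegrable_const,
      intervalIntegral.integral_const_mul, intervalIntegral.integral_const_mul,
      intervalIntegral.integral_const]
    simp only [smul_eq_mul, ← hIf, ← hIg, hμ]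
    field_simp
    ring
  have vF : ∫ t in a..b, (F t) ^ 2 ≤ (b - a) * ((Mf - mf) / 2) ^ 2 :=
    gruss_var a b hab f hf' mf Mf hfb
  have vG : ∫ t in a..b, (G t) ^ 2 ≤ (b - a) * ((Mg - mg) / 2) ^ 2 :=
    gruss_var a b hab g hg' mg Mg hgb
  have cs := gruss_cs a b hab.le F G hF' hG'
  have nnF : 0 ≤ ∫ t in a..b, (F t) ^ 2 :=
    intervalIntegral.integral_nonneg hab.le (fun t _ => sq_nonneg _)
  have nnG : 0 ≤ ∫ t in a..b, (G t) ^ 2 :=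
    intervalIntegral.integral_nonneg hab.le (fun t _ => sq_nonneg _)
  have hMf : mf ≤ Mf := by
    have := hfb a ⟨le_refl a, hab.le⟩; linarith [this.1, this.2]
  have hMg : mg ≤ Mg := by
    have := hgb a ⟨le_refl a, hab.le⟩; linarith [this.1, this.2]
  set T := μ * ∫ t in a..b, F t * G t with hT
  set D := (1 / 4) * (Mf - mf) * (Mg - mg) with hD
  have hDnn : 0 ≤ D := by
    apply mul_nonneg; apply mul_nonneg <;> linarith
    linarith
  have hT2 : T ^ 2 ≤ D ^ 2 := by
    have hμpos : 0 < μ := by positivity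
    have h1 : (∫ t in a..b, F t * G t) ^ 2 ≤
        ((b - a) * ((Mf - mf) / 2) ^ 2) * ((b - a) * ((Mg - mg) / 2) ^ 2) := by
      calc (∫ t in a..b, F t * G t) ^ 2
          ≤ (∫ t in a..b, (F t) ^ 2) * (∫ t in a..b, (G t) ^ 2) := cs
        _ ≤ ((b - a) * ((Mf - mf) / 2) ^ 2) * ((b - a) * ((Mg - mg) / 2) ^ 2) := by
            apply mul_le_mul vF vG nnG
            positivity
    have : T ^ 2 = μ ^ 2 * (∫ t in a..b, F t * G t) ^ 2 := by rw [hT]; ring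
    rw [this]
    have h2 : μ ^ 2 * (∫ t in a..b, F t * G t) ^ 2 ≤
        μ ^ 2 * (((b - a) * ((Mf - mf) / 2) ^ 2) * ((b - a) * ((Mg - mg) / 2) ^ 2)) := by
      apply mul_le_mul_of_nonneg_left h1 (by positivity)
    calc μ ^ 2 * (∫ t in a..b, F t * G t) ^ 2
        ≤ μ ^ 2 * (((b - a) * ((Mf - mf) / 2) ^ 2) * ((b - a) * ((Mg - mg) / 2) ^ 2)) := h2
      _ = D ^ 2 := by
          have e : μ ^ 2 * (((b - a) * ((Mf - mf) / 2) ^ 2) * ((b - a) * ((Mg - mg) / 2) ^ 2))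
              = (μ * (b - a)) ^ 2 * ((1 / 4) * (Mf - mf) * (Mg - mg)) ^ 2 := by ring
          rw [e, hμba, hD]; ring
  have habs : |T| ≤ D := by
    have := Real.sqrt_le_sqrt hT2
    rwa [Real.sqrt_sq_eq_abs, Real.sqrt_sq hDnn] at this
  have h3 : (b - a) * (μ ^ 2 * If * Ig) = μ * If * Ig := by
    rw [hμ]; field_simp
  calc |μ * ∫ t in a..b, f t * g t - μ ^ 2 * If * Ig| = |T| := by
        rw [hT, key, intervalIntegral.integral_sub ifg intervalIntegrable_const,
          intervalIntegral.integral_const, smul_eq_mul, h3]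
    _ ≤ D := habs
end

section
/- Let C : I → ℝ² be a continuous curve on an interval I ⊆ ℝ. Then every point of the convex hull of the image of C is a convex combination of at most 2 points of the curve; i.e., for every v in the convex hull there exist t₁, t₂ ∈ I and λ ∈ [0,1] with v = λC(t₁) + (1−λ)C(t₂). -/
def cr (p q : ℝ × ℝ) : ℝ := p.1 * q.2 - p.2 * q.1

lemma cr_dec (u w x : ℝ × ℝ) : (cr u w) • x = (cr x w) • u + (cr u x) • w := by
  refine Prod.ext ?_ ?_ <;> simp [cr] <;> ring

lemma core (K : Set (ℝ × ℝ)) (hK : IsPreconnected K) (v x₁ x₂ x₃ : ℝ × ℝ)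
    (h1 : x₁ ∈ K) (h2 : x₂ ∈ K) (h3 : x₃ ∈ K) (hvK : v ∉ K)
    (α β γ : ℝ) (hα : 0 < α) (hβ : 0 < β) (hγ : 0 < γ)
    (hrel : α • (x₁ - v) + β • (x₂ - v) + γ • (x₃ - v) = 0)
    (hc : 0 < cr (x₁ - v) (x₂ - v))
    (hno : ∀ x ∈ K, ∀ y ∈ K, ∀ s : ℝ, 0 < s → x - v + s • (y - v) ≠ 0) :
    False := by
  set d₁ := x₁ - v with hd1
  set d₂ := x₂ - v with hd2
  set d₃ := x₃ - v with hd3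
  have hr1 : α * d₁.1 + β * d₂.1 + γ * d₃.1 = 0 := by
    have := congrArg Prod.fst hrel; simpa using this
  have hr2 : α * d₁.2 + β * d₂.2 + γ * d₃.2 = 0 := by
    have := congrArg Prod.snd hrel; simpa using this
  have hc23 : 0 < cr d₂ d₃ := by
    have h : γ * cr d₂ d₃ = α * cr d₁ d₂ := by
      simp only [cr]; linear_combination d₂.1 * hr2 - d₂.2 * hr1
    nlinarith
  have hc31 : 0 < cr d₃ d₁ := by
    have h : γ * cr d₃ d₁ = β * cr d₁ d₂ := by
      simp only [cr]; linear_combination d₁.2 * hr1 - d₁.1 * hr2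
    nlinarith
  set A : (ℝ × ℝ) → ℝ := fun x => cr d₁ (x - v) with hA
  set B : (ℝ × ℝ) → ℝ := fun x => cr d₂ (x - v) with hB
  set Cc : (ℝ × ℝ) → ℝ := fun x => cr d₃ (x - v) with hCc
  have hABC : ∀ x : ℝ × ℝ, α * A x + β * B x + γ * Cc x = 0 := by
    intro x
    simp only [hA, hB, hCc, cr]
    linear_combination (x - v).2 * hr1 - (x - v).1 * hr2
  have contA : Continuous A := by simp only [hA]; unfold cr; fun_prop
  have contB : Continuous B := by simp only [hB]; unfold cr; fun_prop
  have contC : Continuous Cc := by simp only [hCc]; unfold cr; fun_prop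
  set U : Set (ℝ × ℝ) := {x | A x < 0 ∧ 0 < B x} with hUdef
  set V : Set (ℝ × ℝ) := {x | (B x < 0 ∧ 0 < Cc x) ∨ (Cc x < 0 ∧ 0 < A x)} with hVdef
  have hU : IsOpen U := (isOpen_lt contA continuous_const).inter (isOpen_lt continuous_const contB)
  have hV : IsOpen V :=
    ((isOpen_lt contB continuous_const).inter (isOpen_lt continuous_const contC)).union
      ((isOpen_lt contC continuous_const).inter (isOpen_lt continuous_const contA))
  -- antipodal exclusion helper: c • (x-v) = k • (y-v) with c>0, k<0 is impossible for x,y ∈ K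
  have anti : ∀ x ∈ K, ∀ (y : ℝ × ℝ), y ∈ K → ∀ c k : ℝ, 0 < c → k < 0 →
      c • (x - v) = k • (y - v) → False := by
    intro x hx y hy c k hcpos hk hdec
    have hx' : x - v = (k / c) • (y - v) := by
      have := congrArg (fun z => c⁻¹ • z) hdec
      simp only [smul_smul, inv_mul_cancel₀ (ne_of_gt hcpos), one_smul] at this
      rw [this, div_eq_inv_mul]
    refine hno x hx y hy (-(k / c)) (by have := div_neg_of_neg_of_pos hk hcpos; linarith) ?_
    rw [hx', ← add_smul]
    simp
  have hvx : ∀ x ∈ K, x - v ≠ 0 := fun x hx h0 => hvK (sub_eq_zero.mp h0 ▸ hx)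
  -- coverage
  have hcov : K ⊆ U ∪ V := by
    intro x hx
    have hrelx := hABC x
    have hdec12 : cr d₁ d₂ • (x - v) = (- B x) • d₁ + A x • d₂ := by
      have := cr_dec d₁ d₂ (x - v)
      rw [this]
      congr 1
      congr 1
      simp only [hB, cr]; ring
    have hdec23 : cr d₂ d₃ • (x - v) = (- Cc x) • d₂ + B x • d₃ := by
      have := cr_dec d₂ d₃ (x - v)
      rw [this]
      congr 1
      congr 1
      simp only [hCc, cr]; ring
    rcases lt_trichotomy (A x) 0 with ha | ha | ha
    · rcases lt_trichotomy (B x) 0 with hb | hb | hb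
      · -- a<0, b<0 ⇒ c>0 : V left
        right; left
        constructor
        · exact hb
        · nlinarith
      · -- a<0, b=0 : x - v negative multiple of d₂ : antipodal with x₂
        exfalso
        refine anti x hx x₂ h2 (cr d₁ d₂) (A x) hc ha ?_
        rw [hdec12, hb]; simp; rfl
      · -- a<0, b>0 : U
        left; exact ⟨ha, hb⟩
    · rcases lt_trichotomy (B x) 0 with hb | hb | hb
      · -- a=0, b<0 ⇒ c>0 : V left
        right; left
        exact ⟨hb, by nlinarith⟩
      · -- a=0, b=0 : x = v
        exfalso
        refine hvx x hx ?_
        have h0 : cr d₁ d₂ • (x - v) = 0 := by rw [hdec12, ha, hb]; simp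
        exact (smul_eq_zero.mp h0).resolve_left (ne_of_gt hc)
      · -- a=0, b>0 : antipodal with x₁
        exfalso
        refine anti x hx x₁ h1 (cr d₁ d₂) (- B x) hc (by linarith) ?_
        rw [hdec12, ha]; simp; rfl
    · rcases lt_trichotomy (B x) 0 with hb | hb | hb
      · rcases lt_trichotomy (Cc x) 0 with hcx | hcx | hcx
        · right; right; exact ⟨hcx, ha⟩
        · -- a>0, b<0, c=0 : antipodal with x₃
          exfalso
          refine anti x hx x₃ h3 (cr d₂ d₃) (B x) hc23 hb ?_
          rw [hdec23, hcx]; simp; rfl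
        · right; left; exact ⟨hb, hcx⟩
      · -- a>0, b=0 ⇒ c<0 : V right
        right; right
        exact ⟨by nlinarith, ha⟩
      · -- a>0, b>0 ⇒ c<0 : V right
        right; right
        exact ⟨by nlinarith, ha⟩
  -- memberships
  have hx3U : x₃ ∈ U := by
    constructor
    · show cr d₁ (x₃ - v) < 0
      rw [← hd3]
      have : cr d₁ d₃ = - cr d₃ d₁ := by simp [cr]; ring
      rw [this]; linarith
    · show 0 < cr d₂ (x₃ - v)
      rw [← hd3]; exact hc23
  have hx1V : x₁ ∈ V := by
    left
    constructor
    · show cr d₂ (x₁ - v) < 0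
      rw [← hd1]
      have : cr d₂ d₁ = - cr d₁ d₂ := by simp [cr]; ring
      rw [this]; linarith
    · show 0 < cr d₃ (x₁ - v)
      rw [← hd1]; exact hc31
  obtain ⟨y, hyK, hyU, hyV⟩ := hK U V hU hV hcov ⟨x₃, h3, hx3U⟩ ⟨x₁, h1, hx1V⟩
  rcases hyV with ⟨h', _⟩ | ⟨_, h'⟩
  · exact absurd hyU.2 (by linarith)
  · exact absurd hyU.1 (by linarith)

lemma para (x y : ℝ × ℝ) (hx : x ≠ 0) (h : cr x y = 0) : ∃ k : ℝ, y = k • x := by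
  simp only [cr] at h
  by_cases hx1 : x.1 = 0
  · have hx2 : x.2 ≠ 0 := by
      intro hx2; exact hx (Prod.ext hx1 hx2)
    refine ⟨y.2 / x.2, Prod.ext ?_ ?_⟩
    · show y.1 = _ • x.1
      rw [hx1] at h ⊢
      simp only [smul_eq_mul, mul_zero]
      have : x.2 * y.1 = 0 := by linarith
      rcases mul_eq_zero.mp this with h' | h'
      · exact absurd h' hx2
      · exact h'
    · show y.2 = _ • x.2
      rw [smul_eq_mul, div_mul_cancel₀ _ hx2]
  · refine ⟨y.1 / x.1, Prod.ext ?_ ?_⟩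
    · show y.1 = _ • x.1
      rw [smul_eq_mul, div_mul_cancel₀ _ hx1]
    · show y.2 = _ • x.2
      simp only [smul_eq_mul]
      field_simp
      linarith [h]

lemma key_s12 (I : Set ℝ) (hI : I.OrdConnected) (C : ℝ → ℝ × ℝ) (hC : ContinuousOn C I)
    (v : ℝ × ℝ) (a b c : ℝ) (ha : a ∈ I) (hb : b ∈ I) (hc : c ∈ I)
    (α β γ : ℝ) (hα : 0 ≤ α) (hβ : 0 ≤ β) (hγ : 0 ≤ γ) (hsum : α + β + γ = 1)
    (hv : v = α • C a + β • C b + γ • C c) :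
    ∃ t₁ ∈ I, ∃ t₂ ∈ I, ∃ lam ∈ Set.Icc (0:ℝ) 1,
      v = lam • C t₁ + (1 - lam) • C t₂ := by
  by_contra hcon
  push_neg at hcon
  -- strict positivity of the weights
  rcases eq_or_lt_of_le hα with hα0 | hα'
  · refine hcon b hb c hc β ⟨hβ, by linarith⟩ ?_
    have hγ' : γ = 1 - β := by linarith
    rw [hv, ← hα0, hγ']
    module
  rcases eq_or_lt_of_le hβ with hβ0 | hβ'
  · refine hcon a ha c hc α ⟨hα, by linarith⟩ ?_
    have hγ' : γ = 1 - α := by linarith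
    rw [hv, ← hβ0, hγ']
    module
  rcases eq_or_lt_of_le hγ with hγ0 | hγ'
  · refine hcon a ha b hb α ⟨hα, by linarith⟩ ?_
    have hβ2 : β = 1 - α := by linarith
    rw [hv, ← hγ0, hβ2]
    module
  -- the curve never passes through v
  have hvC : ∀ t ∈ I, C t ≠ v := by
    intro t ht heq
    refine hcon t ht t ht 1 ⟨zero_le_one, le_refl 1⟩ ?_
    rw [heq]; module
  -- the compact interval containing a, b, c
  set l := min a (min b c) with hl
  set r := max a (max b c) with hr
  have hlI : l ∈ I := by
    rcases min_cases a (min b c) with ⟨h, _⟩ | ⟨h, _⟩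
    · rw [hl, h]; exact ha
    · rcases min_cases b c with ⟨h2, _⟩ | ⟨h2, _⟩
      · rw [hl, h, h2]; exact hb
      · rw [hl, h, h2]; exact hc
  have hrI : r ∈ I := by
    rcases max_cases a (max b c) with ⟨h, _⟩ | ⟨h, _⟩
    · rw [hr, h]; exact ha
    · rcases max_cases b c with ⟨h2, _⟩ | ⟨h2, _⟩
      · rw [hr, h, h2]; exact hb
      · rw [hr, h, h2]; exact hc
  have hJ : Set.Icc l r ⊆ I := hI.out hlI hrI
  have haJ : a ∈ Set.Icc l r := ⟨min_le_left _ _, le_max_left _ _⟩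
  have hbJ : b ∈ Set.Icc l r :=
    ⟨le_trans (min_le_right a _) (min_le_left b c),
     le_trans (le_max_left b c) (le_max_right a _)⟩
  have hcJ : c ∈ Set.Icc l r :=
    ⟨le_trans (min_le_right a _) (min_le_right b c),
     le_trans (le_max_right b c) (le_max_right a _)⟩
  set K : Set (ℝ × ℝ) := C '' Set.Icc l r with hKdef
  have hK : IsPreconnected K := (isPreconnected_Icc).image C (hC.mono hJ)
  have hvK : v ∉ K := by
    rintro ⟨t, ht, h⟩
    exact hvC t (hJ ht) h
  have haK : C a ∈ K := ⟨a, haJ, rfl⟩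
  have hbK : C b ∈ K := ⟨b, hbJ, rfl⟩
  have hcK : C c ∈ K := ⟨c, hcJ, rfl⟩
  have hno : ∀ x ∈ K, ∀ y ∈ K, ∀ s : ℝ, 0 < s → x - v + s • (y - v) ≠ 0 := by
    rintro x ⟨t₁, ht₁, rfl⟩ y ⟨t₂, ht₂, rfl⟩ s hs h0
    have h1s : (0:ℝ) < 1 + s := by linarith
    refine hcon t₁ (hJ ht₁) t₂ (hJ ht₂) (1/(1+s))
      ⟨by positivity, by rw [div_le_one h1s]; linarith⟩ ?_
    have h0f := congrArg Prod.fst h0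
    have h0s := congrArg Prod.snd h0
    simp only [Prod.fst_add, Prod.fst_sub, Prod.smul_fst, Prod.snd_add, Prod.snd_sub,
      Prod.smul_snd, smul_eq_mul, Prod.fst_zero, Prod.snd_zero] at h0f h0s
    refine Prod.ext ?_ ?_
    · show v.1 = _
      simp only [Prod.fst_add, Prod.smul_fst, smul_eq_mul]
      field_simp
      nlinarith [h0f]
    · show v.2 = _
      simp only [Prod.snd_add, Prod.smul_snd, smul_eq_mul]
      field_simp
      nlinarith [h0s]
  -- the relation between the direction vectors
  have hrel : α • (C a - v) + β • (C b - v) + γ • (C c - v) = 0 := by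
    rw [hv]
    have h1 : γ = 1 - α - β := by linarith
    rw [h1]
    module
  have hd1 : C a - v ≠ 0 := sub_ne_zero.mpr (hvC a ha)
  have hd2 : C b - v ≠ 0 := sub_ne_zero.mpr (hvC b hb)
  have hd3 : C c - v ≠ 0 := sub_ne_zero.mpr (hvC c hc)
  rcases lt_trichotomy (cr (C a - v) (C b - v)) 0 with h12 | h12 | h12
  · -- swap the roles of a and b
    have hrel' : β • (C b - v) + α • (C a - v) + γ • (C c - v) = 0 := by
      rw [add_comm (β • (C b - v)) (α • (C a - v))]; exact hrel
    have hc' : 0 < cr (C b - v) (C a - v) := by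
      have : cr (C b - v) (C a - v) = - cr (C a - v) (C b - v) := by simp [cr]; ring
      rw [this]; linarith
    exact core K hK v (C b) (C a) (C c) hbK haK hcK hvK β α γ hβ' hα' hγ' hrel' hc' hno
  · -- collinear case
    obtain ⟨k₂, hk₂⟩ := para (C a - v) (C b - v) hd1 h12
    have h13 : cr (C a - v) (C c - v) = 0 := by
      have hr1 := congrArg Prod.fst hrel
      have hr2 := congrArg Prod.snd hrel
      simp only [Prod.fst_add, Prod.fst_sub, Prod.smul_fst, Prod.snd_add, Prod.snd_sub,
        Prod.smul_snd, smul_eq_mul, Prod.fst_zero, Prod.snd_zero] at hr1 hr2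
      have hγne : γ ≠ 0 := ne_of_gt hγ'
      simp only [cr, Prod.fst_sub, Prod.snd_sub] at h12 ⊢
      have hkey : γ * (((C a).1 - v.1) * ((C c).2 - v.2) - ((C a).2 - v.2) * ((C c).1 - v.1))
          = 0 := by
        linear_combination ((C a).1 - v.1) * hr2 - ((C a).2 - v.2) * hr1 - β * h12
      rcases mul_eq_zero.mp hkey with h' | h'
      · exact absurd h' hγne
      · exact h'
    obtain ⟨k₃, hk₃⟩ := para (C a - v) (C c - v) hd1 h13
    have hscal : (α + β * k₂ + γ * k₃) • (C a - v) = 0 := by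
      rw [← hrel, hk₂, hk₃]
      module
    have hco : α + β * k₂ + γ * k₃ = 0 :=
      (smul_eq_zero.mp hscal).resolve_right hd1
    rcases lt_trichotomy k₂ 0 with hk | hk | hk
    · refine hno (C b) hbK (C a) haK (-k₂) (by linarith) ?_
      rw [hk₂, ← add_smul]
      simp
    · rw [hk] at hk₂
      simp at hk₂
      exact hd2 hk₂
    · have hk3neg : k₃ < 0 := by nlinarith
      refine hno (C c) hcK (C a) haK (-k₃) (by linarith) ?_
      rw [hk₃, ← add_smul]
      simp
  · exact core K hK v (C a) (C b) (C c) haK hbK hcK hvK α β γ hα' hβ' hγ' hrel h12 hno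

lemma pad (t : Finset (ℝ × ℝ)) (hne : t.Nonempty) (hcard : t.card ≤ 3) :
    ∃ p q r, p ∈ t ∧ q ∈ t ∧ r ∈ t ∧ (↑t : Set (ℝ × ℝ)) ⊆ {p, q, r} := by
  have h123 : t.card = 1 ∨ t.card = 2 ∨ t.card = 3 := by
    have := hne.card_pos; omega
  rcases h123 with h | h | h
  · obtain ⟨a, rfl⟩ := Finset.card_eq_one.mp h
    exact ⟨a, a, a, by simp, by simp, by simp, by simp⟩
  · obtain ⟨a, b, hab, rfl⟩ := Finset.card_eq_two.mp h
    refine ⟨a, b, b, by simp, by simp, by simp, ?_⟩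
    intro x hx
    simp only [Finset.coe_insert, Finset.coe_singleton, Set.mem_insert_iff,
      Set.mem_singleton_iff] at hx ⊢
    tauto
  · obtain ⟨a, b, c, _, _, _, rfl⟩ := Finset.card_eq_three.mp h
    refine ⟨a, b, c, by simp, by simp, by simp, ?_⟩
    intro x hx
    simp only [Finset.coe_insert, Finset.coe_singleton, Set.mem_insert_iff,
      Set.mem_singleton_iff] at hx ⊢
    tauto

theorem caratheodory_planar_curve (I : Set ℝ) (hI : I.OrdConnected)
    (C : ℝ → ℝ × ℝ) (hC : ContinuousOn C I)
    (v : ℝ × ℝ) (hv : v ∈ convexHull ℝ (C '' I)) :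
    ∃ t₁ ∈ I, ∃ t₂ ∈ I, ∃ lam ∈ Set.Icc (0:ℝ) 1,
      v = lam • C t₁ + (1 - lam) • C t₂ := by
  rw [convexHull_eq_union] at hv
  simp only [Set.mem_iUnion] at hv
  obtain ⟨t, hts, hai, hvt⟩ := hv
  have hne : t.Nonempty := by
    rcases Finset.eq_empty_or_nonempty t with rfl | h
    · simp at hvt
    · exact h
  have hcard : t.card ≤ 3 := by
    have h1 := hai.card_le_finrank_succ
    have h2 : Module.finrank ℝ (vectorSpan ℝ (Set.range ((↑) : t → ℝ × ℝ)))
        ≤ Module.finrank ℝ (ℝ × ℝ) := Submodule.finrank_le _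
    have h3 : Module.finrank ℝ (ℝ × ℝ) = 2 := by simp
    have h4 : Fintype.card t = t.card := Fintype.card_coe t
    omega
  obtain ⟨p, q, r, hp, hq, hr, hsub⟩ := pad t hne hcard
  have hvpqr : v ∈ convexHull ℝ ({p, q, r} : Set (ℝ × ℝ)) := convexHull_mono hsub hvt
  have hqr : ({q, r} : Set (ℝ × ℝ)).Nonempty := ⟨q, Or.inl rfl⟩
  rw [show ({p, q, r} : Set (ℝ × ℝ)) = insert p {q, r} from rfl,
    convexHull_insert hqr, convexHull_pair] at hvpqr
  rw [mem_convexJoin] at hvpqr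
  obtain ⟨x, hx, y, hy, hvseg⟩ := hvpqr
  rw [Set.mem_singleton_iff] at hx
  subst hx
  obtain ⟨θ₁, θ₂, hθ₁, hθ₂, hθs, hθeq⟩ := hvseg
  obtain ⟨φ₁, φ₂, hφ₁, hφ₂, hφs, hφeq⟩ := hy
  obtain ⟨a, haI, hpa⟩ := hts hp
  obtain ⟨b, hbI, hqb⟩ := hts hq
  obtain ⟨c, hcI, hrc⟩ := hts hr
  refine key_s12 I hI C hC v a b c haI hbI hcI θ₁ (θ₂ * φ₁) (θ₂ * φ₂)
    hθ₁ (mul_nonneg hθ₂ hφ₁) (mul_nonneg hθ₂ hφ₂) (by nlinarith) ?_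
  rw [hpa, hqb, hrc, ← hθeq, ← hφeq]
  module
end

section
/- Let μ be a finite positive measure on a compact interval [a,b], and let f, g be continuous functions on [a,b]. Then there exist t₁, t₂ ∈ [a,b] and λ ∈ [0, μ([a,b])] such that ∫ f dμ = λf(t₁) + (μ([a,b]) − λ)f(t₂) and ∫ g dμ = λg(t₁) + (μ([a,b]) − λ)g(t₂) simultaneously. -/
open MeasureTheory


open MeasureTheory Complex Set

lemma key_antipodal (a b : ℝ) (hab : a ≤ b)
    (μ : Measure ℝ) [IsFiniteMeasure μ]
    (F G : ℝ → ℝ) (hF : ContinuousOn F (Set.Icc a b)) (hG : ContinuousOn G (Set.Icc a b))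
    (hM : 0 < (μ (Set.Icc a b)).toReal)
    (hIF : ∫ t in Set.Icc a b, F t ∂μ = 0) (hIG : ∫ t in Set.Icc a b, G t ∂μ = 0) :
    (∃ t ∈ Set.Icc a b, F t = 0 ∧ G t = 0) ∨
    (∃ s ∈ Set.Icc a b, ∃ t ∈ Set.Icc a b, ∃ r : ℝ, 0 < r ∧
      F t = -r * F s ∧ G t = -r * G s) := by
  by_contra hcon
  push_neg at hcon
  obtain ⟨h1, h2⟩ := hcon
  set K : Set ℝ := Set.Icc a b with hK
  have hKc : IsCompact K := isCompact_Icc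
  have hKne : K.Nonempty := Set.nonempty_Icc.mpr hab
  have ha : a ∈ K := Set.left_mem_Icc.mpr hab
  -- the complex curve
  set w : ℝ → ℂ := fun t => (F t : ℂ) + (G t : ℂ) * Complex.I with hw
  have hw_re : ∀ t, (w t).re = F t := by intro t; simp [hw]
  have hw_im : ∀ t, (w t).im = G t := by intro t; simp [hw]
  have hw0 : ∀ t ∈ K, w t ≠ 0 := by
    intro t ht h0
    have hre : F t = 0 := by rw [← hw_re t, h0]; simp
    have him : G t = 0 := by rw [← hw_im t, h0]; simp
    exact h1 t ht hre him
  have hwanti : ∀ s ∈ K, ∀ t ∈ K, ∀ r : ℝ, 0 < r → w t ≠ -(r : ℂ) * w s := by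
    intro s hs t ht r hr heq
    have h1r := congrArg Complex.re heq
    have h1i := congrArg Complex.im heq
    simp only [Complex.mul_re, Complex.mul_im, Complex.neg_re, Complex.neg_im,
      Complex.ofReal_re, Complex.ofReal_im, hw_re, hw_im, neg_zero, zero_mul,
      sub_zero, add_zero, mul_zero, zero_add] at h1r h1i
    exact h2 s hs t ht r hr h1r h1i
  have hwc : ContinuousOn w K :=
    (Complex.continuous_ofReal.comp_continuousOn hF).add
      ((Complex.continuous_ofReal.comp_continuousOn hG).mul continuousOn_const)
  -- normalized curve
  set z : ℝ → ℂ := fun t => w t / w a with hz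
  have hwa : w a ≠ 0 := hw0 a ha
  have hz0 : ∀ t ∈ K, z t ≠ 0 := fun t ht => div_ne_zero (hw0 t ht) hwa
  have hwz : ∀ t, w t = z t * w a := by
    intro t
    simp only [hz]
    exact (div_mul_cancel₀ _ hwa).symm
  have hzslit : ∀ t ∈ K, z t ∈ Complex.slitPlane := by
    intro t ht
    rw [Complex.mem_slitPlane_iff]
    by_contra hcon2
    push_neg at hcon2
    obtain ⟨hre, him⟩ := hcon2
    have hzt : z t = ((z t).re : ℂ) := by
      apply Complex.ext <;> simp [him]
    have hrene : (z t).re ≠ 0 := by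
      intro h0
      exact hz0 t ht (by rw [hzt, h0]; simp)
    have hrelt : (z t).re < 0 := lt_of_le_of_ne hre hrene
    have hwt : w t = ((z t).re : ℂ) * w a := by rw [← hzt]; exact hwz t
    refine hwanti a ha t ht (-(z t).re) (by linarith) ?_
    rw [hwt]; push_cast; ring
  have hzc : ContinuousOn z K := hwc.div_const (w a)
  set θ : ℝ → ℝ := fun t => (z t).arg with hθ
  have hθc : ContinuousOn θ K := fun t ht =>
    (Complex.continuousAt_arg (hzslit t ht)).comp_continuousWithinAt (hzc t ht)
  obtain ⟨s₀, hs₀, hmin⟩ := hKc.exists_isMinOn hKne hθc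
  obtain ⟨t₀, ht₀, hmax⟩ := hKc.exists_isMaxOn hKne hθc
  have hmin' : ∀ t ∈ K, θ s₀ ≤ θ t := fun t ht => isMinOn_iff.mp hmin t ht
  have hmax' : ∀ t ∈ K, θ t ≤ θ t₀ := fun t ht => isMaxOn_iff.mp hmax t ht
  set m := θ s₀ with hm
  set M' := θ t₀ with hM'
  have hpol : ∀ t ∈ K, z t = (‖z t‖ : ℂ) * Complex.exp ((θ t : ℝ) * Complex.I) :=
    fun t _ => (Complex.norm_mul_exp_arg_mul_I (z t)).symm
  by_cases hwide : m + Real.pi ≤ M'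
  · -- antipodal pair exists: contradiction with hwanti
    have hsub : Set.uIcc s₀ t₀ ⊆ K := by
      have hs₀' : s₀ ∈ Set.uIcc a b := by rwa [Set.uIcc_of_le hab]
      have ht₀' : t₀ ∈ Set.uIcc a b := by rwa [Set.uIcc_of_le hab]
      rw [hK, ← Set.uIcc_of_le hab]
      exact Set.uIcc_subset_uIcc hs₀' ht₀'
    have hmem : m + Real.pi ∈ Set.uIcc (θ s₀) (θ t₀) := by
      rw [Set.uIcc_of_le (by linarith [Real.pi_pos] : θ s₀ ≤ θ t₀)]
      exact ⟨by linarith [Real.pi_pos], hwide⟩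
    obtain ⟨u, hu_mem, hu⟩ := intermediate_value_uIcc (hθc.mono hsub) hmem
    have huK : u ∈ K := hsub hu_mem
    have hzu := hpol u huK
    rw [hu] at hzu
    have hzs := hpol s₀ hs₀
    have habs₀ : ‖z s₀‖ ≠ 0 := by
      simpa using hz0 s₀ hs₀
    have habsu : (0:ℝ) < ‖z u‖ := norm_pos_iff.mpr (hz0 u huK)
    set ru := ‖z u‖ with hru
    set rs := ‖z s₀‖ with hrs
    have hr : (0:ℝ) < ru / rs :=
      div_pos habsu (lt_of_le_of_ne (norm_nonneg _) (Ne.symm habs₀))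
    have hexp : Complex.exp (((m + Real.pi : ℝ) : ℂ) * Complex.I)
        = -Complex.exp ((m : ℝ) * Complex.I) := by
      push_cast
      rw [add_mul, Complex.exp_add, Complex.exp_pi_mul_I]
      ring
    refine hwanti s₀ hs₀ u huK (ru / rs) hr ?_
    have hrsC : (rs : ℂ) ≠ 0 := by exact_mod_cast habs₀
    rw [hwz u, hwz s₀, hzu, hzs, hexp]
    push_cast
    field_simp [hrsC]
    rw [← hm, mul_comm I]
  · -- no antipodal pair: direction argument gives contradiction
    push_neg at hwide
    set c := (m + M') / 2 with hc
    set Fc : ℝ → ℝ := fun t => (z t * Complex.exp (((-c : ℝ) : ℂ) * Complex.I)).re with hFc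
    have hFc_pos : ∀ t ∈ K, 0 < Fc t := by
      intro t ht
      have habst : (0:ℝ) < ‖z t‖ := norm_pos_iff.mpr (hz0 t ht)
      have hre : (z t).re = ‖z t‖ * Real.cos (θ t) := by
        rw [hθ]
        rw [Complex.cos_arg (hz0 t ht)]
        field_simp
      have him : (z t).im = ‖z t‖ * Real.sin (θ t) := by
        rw [hθ]
        rw [Complex.sin_arg]
        field_simp
      have hFeq : Fc t = ‖z t‖ * Real.cos (θ t - c) := by
        simp only [hFc, Complex.mul_re, Complex.exp_ofReal_mul_I_re,
          Complex.exp_ofReal_mul_I_im, Real.cos_neg, Real.sin_neg]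
        rw [hre, him, Real.cos_sub]
        ring
      rw [hFeq]
      apply mul_pos habst
      apply Real.cos_pos_of_mem_Ioo
      have hl := hmin' t ht
      have hh := hmax' t ht
      constructor <;> simp only [hc] <;> linarith
    -- Fc as a linear combination of F and G
    set Kc : ℂ := (w a)⁻¹ * Complex.exp (((-c : ℝ) : ℂ) * Complex.I) with hKc'
    have hFc_eq : ∀ t, Fc t = F t * Kc.re - G t * Kc.im := by
      intro t
      have hmul : z t * Complex.exp (((-c : ℝ) : ℂ) * Complex.I) = w t * Kc := by
        rw [hKc', hz]
        simp only
        field_simp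
      have h' : Fc t = (w t * Kc).re := congrArg Complex.re hmul
      rw [h', Complex.mul_re, hw_re, hw_im]
    -- integral of Fc is zero
    have hFint : IntegrableOn F K μ := hF.integrableOn_compact hKc
    have hGint : IntegrableOn G K μ := hG.integrableOn_compact hKc
    have hFcint : IntegrableOn Fc K μ := by
      have h' : IntegrableOn (fun t => F t * Kc.re - G t * Kc.im) K μ :=
        (hFint.mul_const _).sub (hGint.mul_const _)
      exact h'.congr_fun (fun t _ => (hFc_eq t).symm) hKc.measurableSet
    have hIFc : ∫ t in K, Fc t ∂μ = 0 := by
      have h' : ∫ t in K, Fc t ∂μ = ∫ t in K, (F t * Kc.re - G t * Kc.im) ∂μ :=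
        setIntegral_congr_fun hKc.measurableSet (fun t _ => hFc_eq t)
      rw [h', integral_sub (hFint.mul_const _) (hGint.mul_const _),
        integral_mul_const, integral_mul_const, hIF, hIG]
      ring
    -- but the integral is bounded below by a positive constant
    have hFcc : ContinuousOn Fc K := by
      rw [hFc]
      exact Complex.continuous_re.comp_continuousOn (hzc.mul continuousOn_const)
    obtain ⟨t₁, ht₁, hmin₁⟩ := hKc.exists_isMinOn hKne hFcc
    have hε : 0 < Fc t₁ := hFc_pos t₁ ht₁
    have hlow : Fc t₁ * (μ K).toReal ≤ ∫ t in K, Fc t ∂μ := by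
      have h' := setIntegral_mono_on (integrableOn_const (measure_ne_top μ K))
        hFcint hKc.measurableSet (fun x hx => isMinOn_iff.mp hmin₁ x hx)
      rwa [setIntegral_const, smul_eq_mul, measureReal_def, mul_comm] at h'
    rw [hIFc] at hlow
    nlinarith [hM]

theorem two_point_quadrature (a b : ℝ) (hab : a < b)
    (μ : Measure ℝ) [IsFiniteMeasure μ]
    (f g : ℝ → ℝ) (hf : ContinuousOn f (Set.Icc a b)) (hg : ContinuousOn g (Set.Icc a b)) :
    ∃ t₁ ∈ Set.Icc a b, ∃ t₂ ∈ Set.Icc a b,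
      ∃ lam ∈ Set.Icc (0:ℝ) (μ (Set.Icc a b)).toReal,
        (∫ t in Set.Icc a b, f t ∂μ = lam * f t₁ + ((μ (Set.Icc a b)).toReal - lam) * f t₂) ∧
        (∫ t in Set.Icc a b, g t ∂μ = lam * g t₁ + ((μ (Set.Icc a b)).toReal - lam) * g t₂) := by
  have haK : a ∈ Set.Icc a b := Set.left_mem_Icc.mpr hab.le
  set M := (μ (Set.Icc a b)).toReal with hM
  by_cases hM0 : M = 0
  · -- trivial case: zero measure
    have h0 : μ (Set.Icc a b) = 0 := by
      rcases (ENNReal.toReal_eq_zero_iff _).mp hM0 with h | h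
      · exact h
      · exact absurd h (measure_ne_top μ _)
    have hres : μ.restrict (Set.Icc a b) = 0 := Measure.restrict_eq_zero.mpr h0
    refine ⟨a, haK, a, haK, 0, ⟨le_refl 0, hM0.ge⟩, ?_, ?_⟩ <;>
      simp [hres, hM0]
  · have hMpos : 0 < M := lt_of_le_of_ne ENNReal.toReal_nonneg (Ne.symm hM0)
    set If := ∫ t in Set.Icc a b, f t ∂μ with hIf
    set Ig := ∫ t in Set.Icc a b, g t ∂μ with hIg
    set A := If / M with hA
    set B := Ig / M with hB
    have hfi : IntegrableOn f (Set.Icc a b) μ := hf.integrableOn_compact isCompact_Icc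
    have hgi : IntegrableOn g (Set.Icc a b) μ := hg.integrableOn_compact isCompact_Icc
    have hci : ∀ c : ℝ, IntegrableOn (fun _ => c) (Set.Icc a b) μ := fun c =>
      integrableOn_const (measure_ne_top μ _)
    have hIF : ∫ t in Set.Icc a b, (f t - A) ∂μ = 0 := by
      rw [integral_sub hfi (hci A), setIntegral_const, smul_eq_mul, measureReal_def, ← hM, ← hIf, hA]
      field_simp
      ring
    have hIG : ∫ t in Set.Icc a b, (g t - B) ∂μ = 0 := by
      rw [integral_sub hgi (hci B), setIntegral_const, smul_eq_mul, measureReal_def, ← hM, ← hIg, hB]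
      field_simp
      ring
    have hIfA : If = M * A := by rw [hA]; field_simp
    have hIgB : Ig = M * B := by rw [hB]; field_simp
    rcases key_antipodal a b hab.le μ (fun t => f t - A) (fun t => g t - B)
      (hf.sub continuousOn_const) (hg.sub continuousOn_const) hMpos hIF hIG with
      ⟨t, ht, hft, hgt⟩ | ⟨s, hs, t, ht, r, hr, hFr, hGr⟩
    · refine ⟨t, ht, t, ht, M, ⟨hMpos.le, le_refl M⟩, ?_, ?_⟩
      · have : f t = A := by linarith
        rw [this, hIfA]; ring
      · have : g t = B := by linarith
        rw [this, hIgB]; ring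
    · have h1r : (0:ℝ) < 1 + r := by linarith
      refine ⟨s, hs, t, ht, M * r / (1 + r), ⟨by positivity, ?_⟩, ?_, ?_⟩
      · rw [div_le_iff₀ h1r]
        nlinarith
      · rw [hIfA]
        field_simp
        linear_combination (-1) * hFr
      · rw [hIgB]
        field_simp
        linear_combination (-1) * hGr
end

section
/- Let X be a random variable concentrated on an interval I ⊆ ℝ and let f be a continuous function on I with E[f(X)²] < ∞. Then there exist t₁, t₂ ∈ I such that Var(f(X)) = (1/4)(f(t₁) − f(t₂))². -/
open MeasureTheory

theorem variance_representation (I : Set ℝ) (hI : I.OrdConnected)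
    (μ : Measure ℝ) [IsProbabilityMeasure μ] (hμI : μ I = 1)
    (f : ℝ → ℝ) (hf : ContinuousOn f I) (hf2 : MemLp f 2 μ) :
    ∃ t₁ ∈ I, ∃ t₂ ∈ I,
      (∫ t, f t ^ 2 ∂μ) - (∫ t, f t ∂μ) ^ 2 = (1 / 4) * (f t₁ - f t₂) ^ 2 := by
  set V : ℝ := (∫ t, f t ^ 2 ∂μ) - (∫ t, f t ∂μ) ^ 2 with hVdef
  have hVvar : V = ProbabilityTheory.variance f μ := by
    rw [ProbabilityTheory.variance_eq_sub hf2]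
    simp [hVdef, Pi.pow_apply]
  have hV0 : 0 ≤ V := hVvar ▸ ProbabilityTheory.variance_nonneg f μ
  have hIne : I.Nonempty := by
    by_contra h
    rw [Set.not_nonempty_iff_eq_empty] at h
    simp [h] at hμI
  have hImeas : MeasurableSet I := hI.measurableSet
  have haeI : ∀ᵐ x ∂μ, x ∈ I := by
    rw [ae_iff]
    have : μ Iᶜ = 0 := by
      rw [measure_compl hImeas (measure_ne_top μ I), hμI, measure_univ, tsub_self]
    simpa [Set.compl_def] using this
  have hfi : Integrable f μ := hf2.integrable one_le_two
  have hf2i : Integrable (fun x => f x ^ 2) μ := by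
    have := hf2.integrable_sq
    simpa [sq] using this
  set E : ℝ := ∫ t, f t ∂μ with hEdef
  have key : ∃ s ∈ I, ∃ t ∈ I, 4 * V ≤ (f s - f t) ^ 2 := by
    by_contra hcon
    push_neg at hcon
    obtain ⟨x₀, hx₀⟩ := hIne
    have hVpos : 0 < V := by nlinarith [hcon x₀ hx₀ x₀ hx₀]
    set σ : ℝ := Real.sqrt V with hσdef
    have hσ : σ ^ 2 = V := Real.sq_sqrt hV0
    have hσpos : 0 < σ := Real.sqrt_pos.2 hVpos
    have hlt : ∀ s ∈ I, ∀ t ∈ I, f s - f t < 2 * σ := by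
      intro s hs t ht
      nlinarith [hcon s hs t ht, sq_nonneg (f s - f t - 2 * σ)]
    have hbddA : BddAbove (f '' I) := by
      refine ⟨f x₀ + 2 * σ, ?_⟩
      rintro _ ⟨x, hx, rfl⟩
      linarith [hlt x hx x₀ hx₀]
    have hbddB : BddBelow (f '' I) := by
      refine ⟨f x₀ - 2 * σ, ?_⟩
      rintro _ ⟨x, hx, rfl⟩
      linarith [hlt x₀ hx₀ x hx]
    set M : ℝ := sSup (f '' I) with hMdef
    set m : ℝ := sInf (f '' I) with hmdef
    have hne : (f '' I).Nonempty := ⟨f x₀, x₀, hx₀, rfl⟩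
    have hleM : ∀ x ∈ I, f x ≤ M := fun x hx => le_csSup hbddA ⟨x, hx, rfl⟩
    have hmle : ∀ x ∈ I, m ≤ f x := fun x hx => csInf_le hbddB ⟨x, hx, rfl⟩
    have hmM : m ≤ M := le_trans (hmle x₀ hx₀) (hleM x₀ hx₀)
    have hMm : M - m ≤ 2 * σ := by
      have h1 : M ≤ m + 2 * σ := by
        apply csSup_le hne
        rintro _ ⟨s, hs, rfl⟩
        have h2 : f s - 2 * σ ≤ m := by
          apply le_csInf hne
          rintro _ ⟨t, ht, rfl⟩
          linarith [hlt s hs t ht]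
        linarith
      linarith
    have hgi : Integrable (fun x => (M - f x) * (f x - m)) μ := by
      have heq : (fun x => (M - f x) * (f x - m))
          = fun x => (M + m) * f x - M * m - f x ^ 2 := by
        funext x; ring
      rw [heq]
      exact ((hfi.const_mul _).sub (integrable_const _)).sub hf2i
    have hgnn : 0 ≤ᵐ[μ] fun x => (M - f x) * (f x - m) :=
      haeI.mono fun x hx =>
        mul_nonneg (by linarith [hleM x hx]) (by linarith [hmle x hx])
    have hgint : ∫ x, (M - f x) * (f x - m) ∂μ
        = (M + m) * E - M * m - ∫ x, f x ^ 2 ∂μ := by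
      have heq : (fun x => (M - f x) * (f x - m))
          = fun x => (M + m) * f x - M * m - f x ^ 2 := by
        funext x; ring
      have h1 : ∫ x, ((M + m) * f x - M * m) - f x ^ 2 ∂μ
          = (∫ x, (M + m) * f x - M * m ∂μ) - ∫ x, f x ^ 2 ∂μ :=
        integral_sub ((hfi.const_mul _).sub (integrable_const _)) hf2i
      have h2 : ∫ x, (M + m) * f x - M * m ∂μ
          = (∫ x, (M + m) * f x ∂μ) - ∫ (_ : ℝ), M * m ∂μ :=
        integral_sub (hfi.const_mul _) (integrable_const _)
      have h3 : ∫ x, (M + m) * f x ∂μ = (M + m) * ∫ x, f x ∂μ :=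
        integral_const_mul _ _
      rw [heq, h1, h2, h3, integral_const]
      simp [hEdef]
    have h1 : 0 ≤ ∫ x, (M - f x) * (f x - m) ∂μ := integral_nonneg_of_ae hgnn
    have hf2E : ∫ x, f x ^ 2 ∂μ = V + E ^ 2 := by rw [hVdef]; ring
    have hG : ∫ x, (M - f x) * (f x - m) ∂μ = -V + (M - E) * (E - m) := by
      rw [hgint, hf2E]; ring
    -- V ≤ (M-E)(E-m) ≤ ((M-m)/2)^2 ≤ σ^2 = V forces equalities
    have hVle : V ≤ (M - E) * (E - m) := by linarith [h1, hG.symm.le, hG.le]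
    have hEeq : E = (M + m) / 2 := by
      have h2 : (M + m - 2 * E) ^ 2 ≤ 0 := by nlinarith [hVle, hMm, hσ, hmM]
      have h3 : (M + m - 2 * E) ^ 2 = 0 := le_antisymm h2 (sq_nonneg _)
      have h4 : M + m - 2 * E = 0 := by
        exact pow_eq_zero_iff (by norm_num) |>.mp h3
      linarith
    have hMm4 : (M - m) ^ 2 = 4 * V := by
      have hle : (M - m) ^ 2 ≤ 4 * V := by nlinarith [hMm, hσ, hmM]
      have hge : 4 * V ≤ (M - m) ^ 2 := by nlinarith [hVle, hEeq]
      linarith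
    have hMgtm : m < M := by nlinarith [hMm4, hVpos, hmM]
    have hG0 : ∫ x, (M - f x) * (f x - m) ∂μ = 0 := by
      have : (M - E) * (E - m) ≤ V := by nlinarith [hEeq, hMm4]
      linarith [hG.le, hG.symm.le, h1]
    have hae0 : ∀ᵐ x ∂μ, (M - f x) * (f x - m) = 0 := by
      have := (integral_eq_zero_iff_of_nonneg_ae hgnn hgi).mp hG0
      filter_upwards [this] with x hx
      simpa using hx
    have haeMem : ∀ᵐ x ∂μ, f x = M ∨ f x = m := by
      filter_upwards [hae0] with x hx
      rcases mul_eq_zero.mp hx with h | h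
      · left; linarith
      · right; linarith
    have hexM : ∃ t₁ ∈ I, f t₁ = M := by
      by_contra hno
      push_neg at hno
      have haem : ∀ᵐ x ∂μ, f x = m := by
        filter_upwards [haeMem, haeI] with x hx hxI
        rcases hx with h | h
        · exact absurd h (hno x hxI)
        · exact h
      have : E = m := by
        rw [hEdef, integral_congr_ae haem]
        simp
      rw [hEeq] at this
      linarith
    have hexm : ∃ t₂ ∈ I, f t₂ = m := by
      by_contra hno
      push_neg at hno
      have haem : ∀ᵐ x ∂μ, f x = M := by
        filter_upwards [haeMem, haeI] with x hx hxI
        rcases hx with h | h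
        · exact h
        · exact absurd h (hno x hxI)
      have : E = M := by
        rw [hEdef, integral_congr_ae haem]
        simp
      rw [hEeq] at this
      linarith
    obtain ⟨t₁, ht₁, hft₁⟩ := hexM
    obtain ⟨t₂, ht₂, hft₂⟩ := hexm
    have := hcon t₁ ht₁ t₂ ht₂
    rw [hft₁, hft₂] at this
    linarith [hMm4]
  obtain ⟨s, hs, t, ht, hst⟩ := key
  set g : ℝ → ℝ := fun u => (1 / 4) * (f s - f u) ^ 2 with hgdef
  have hgc : ContinuousOn g I :=
    continuousOn_const.mul ((continuousOn_const.sub hf).pow 2)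
  have hVmem : V ∈ Set.Icc (g s) (g t) := by
    constructor
    · simp [hgdef, hV0]
    · simp only [hgdef]
      linarith
  have hsub := (hI.isPreconnected.intermediate_value hs ht hgc) hVmem
  obtain ⟨u, hu, hgu⟩ := hsub
  exact ⟨s, hs, u, hu, hgu.symm⟩
end

section
/- Let (uₙ) be a bounded sequence in ℝ with u ≤ uₙ ≤ U for all n, and let (pₙ) be nonnegative weights with Σₙ pₙ = 1. Then Σₙ pₙuₙ² − (Σₙ pₙuₙ)² ≤ (1/4)(U − u)². -/
theorem discrete_variance_bound (p u : ℕ → ℝ) (hp : ∀ n, 0 ≤ p n) (hp1 : ∑' n, p n = 1)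
    (l U : ℝ) (hu : ∀ n, l ≤ u n ∧ u n ≤ U) :
    (∑' n, p n * u n ^ 2) - (∑' n, p n * u n) ^ 2 ≤ (1 / 4) * (U - l) ^ 2 := by
  have hps : Summable p := by
    by_contra h
    simp [tsum_eq_zero_of_not_summable h] at hp1
  set C : ℝ := max |l| |U| with hC
  have habs : ∀ n, |u n| ≤ C := by
    intro n
    rcases hu n with ⟨h1, h2⟩
    rcases abs_le.mp (le_refl |l|) with ⟨hl1, _⟩
    rcases abs_le.mp (le_refl |U|) with ⟨_, hU2⟩
    refine abs_le.mpr ⟨le_trans ?_ h1, le_trans h2 ?_⟩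
    · exact le_trans (neg_le_neg (le_max_left _ _)) hl1
    · exact le_trans hU2 (le_max_right _ _)
  have hs1 : Summable (fun n => p n * u n) := by
    refine (hps.mul_right C).of_nonneg_of_le (fun n => abs_nonneg _) (fun n => ?_) |>.of_abs
    rw [abs_mul, abs_of_nonneg (hp n)]
    exact mul_le_mul_of_nonneg_left (habs n) (hp n)
  have hs2 : Summable (fun n => p n * u n ^ 2) := by
    refine (hps.mul_right (C ^ 2)).of_nonneg_of_le
      (fun n => mul_nonneg (hp n) (sq_nonneg _)) (fun n => ?_)
    have : u n ^ 2 ≤ C ^ 2 := by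
      rw [← sq_abs (u n)]
      exact pow_le_pow_left₀ (abs_nonneg _) (habs n) 2
    exact mul_le_mul_of_nonneg_left this (hp n)
  have hs3 : Summable (fun n => p n * ((U + l) * u n - l * U)) := by
    have : (fun n => p n * ((U + l) * u n - l * U))
        = fun n => (U + l) * (p n * u n) - l * U * p n := by
      funext n; ring
    rw [this]
    exact ((hs1.mul_left _).sub (hps.mul_left _))
  set S1 := ∑' n, p n * u n with hS1
  have key : (∑' n, p n * u n ^ 2) ≤ (U + l) * S1 - l * U := by
    have hle : ∀ n, p n * u n ^ 2 ≤ p n * ((U + l) * u n - l * U) := by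
      intro n
      rcases hu n with ⟨h1, h2⟩
      have h3 : 0 ≤ (u n - l) * (U - u n) :=
        mul_nonneg (by linarith) (by linarith)
      nlinarith [hp n]
    calc (∑' n, p n * u n ^ 2) ≤ ∑' n, p n * ((U + l) * u n - l * U) :=
          Summable.tsum_le_tsum hle hs2 hs3
      _ = (U + l) * S1 - l * U := by
          have : (fun n => p n * ((U + l) * u n - l * U))
              = fun n => (U + l) * (p n * u n) - l * U * p n := by
            funext n; ring
          rw [this, Summable.tsum_sub (hs1.mul_left _) (hps.mul_left _), tsum_mul_left,
            tsum_mul_left, hp1, mul_one]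
  nlinarith [sq_nonneg (S1 - (U + l) / 2)]
end
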